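/- arXiv:1301.4428 — 6 statements merged into one kernel-verified Lean document; each statement's English description precedes it below -/
import Mathlib

section
/- If π_0 is the density of Γ(λ, q) for some λ > 0, then for every n ≥ 1 the optimal filter density π_n^{y_{1:n}} is the density of Γ(λ_n, q), where λ_n = b^{−n} λ + Σ_{j=1}^n b^{j−n} y_j. -/
open MeasureTheory Set

/-- Density of the Gamma distribution `Γ(lam, r)` with rate `lam` and shape `r`
(for `x > 0`). -/
noncomputable def gammaDen (lam r x : ℝ) : ℝ :=
  lam ^ r * x ^ (r - 1) * Real.exp (-(lam * x)) / Real.Gamma r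

/-- Signal transition density `p(s, x)`. -/
noncomputable def pKer (α β b s x : ℝ) : ℝ :=
  if 0 ≤ x ∧ x ≤ b * s then
    (b * s) ^ (1 - (α + β)) * x ^ (α - 1) * (b * s - x) ^ (β - 1) /
      (Real.Gamma α * Real.Gamma β / Real.Gamma (α + β))
  else 0

/-- Observation density `g(x, y)`. -/
noncomputable def gObs (β x y : ℝ) : ℝ :=
  x ^ β * y ^ (β - 1) * Real.exp (-(x * y)) / Real.Gamma β

/-- Shifting a set integral over `Ioi a` to one over `Ioi 0`. -/
lemma integral_Ioi_shift (a : ℝ) (f : ℝ → ℝ) :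
    ∫ s in Set.Ioi a, f s = ∫ u in Set.Ioi (0 : ℝ), f (u + a) := by
  rw [← integral_indicator measurableSet_Ioi, ← integral_indicator measurableSet_Ioi,
    ← MeasureTheory.integral_add_right_eq_self ((Set.Ioi a).indicator f) a]
  congr 1
  ext u
  simp only [Set.indicator_apply, Set.mem_Ioi, lt_add_iff_pos_left]

/-- The Gamma integral with a rate parameter. -/
lemma gamma_int {r l : ℝ} (hr : 0 < r) (hl : 0 < l) :
    ∫ t in Set.Ioi (0 : ℝ), t ^ (r - 1) * Real.exp (-(l * t)) = Real.Gamma r / l ^ r := by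
  rw [Real.integral_rpow_mul_exp_neg_mul_Ioi hr hl, one_div, Real.inv_rpow hl.le,
    inv_mul_eq_div]

/-- Prediction step: integrating the transition kernel against a `Γ(l, α+β)` density
yields a `Γ(l/b, α)` density. -/
lemma predict_step (α β b l x : ℝ) (hα : 0 < α) (hβ : 0 < β) (hb : 0 < b)
    (hl : 0 < l) (hx : 0 < x) :
    ∫ s in Set.Ioi (0 : ℝ), pKer α β b s x * gammaDen l (α + β) s
      = gammaDen (l / b) α x := by
  have ha : 0 < x / b := div_pos hx hb
  have hΓα : (0:ℝ) < Real.Gamma α := Real.Gamma_pos_of_pos hα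
  have hΓβ : (0:ℝ) < Real.Gamma β := Real.Gamma_pos_of_pos hβ
  have hΓq : (0:ℝ) < Real.Gamma (α + β) := Real.Gamma_pos_of_pos (by linarith)
  set f : ℝ → ℝ := fun s => pKer α β b s x * gammaDen l (α + β) s with hf
  set C : ℝ := l ^ (α + β) * b ^ (1 - (α + β)) / (Real.Gamma α * Real.Gamma β) with hC
  have h1 : ∀ s : ℝ, f s = (Set.Ici (x / b)).indicator f s := by
    intro s
    rw [Set.indicator_apply]
    split_ifs with h
    · rfl
    · have hns : ¬ (0 ≤ x ∧ x ≤ b * s) := by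
        rintro ⟨-, h2⟩
        exact h ((div_le_iff₀ hb).mpr (by linarith [mul_comm b s]))
      simp [hf, pKer, hns]
  have step1 : ∫ s in Set.Ioi (0 : ℝ), f s = ∫ s in Set.Ioi (x / b), f s := by
    calc ∫ s in Set.Ioi (0 : ℝ), f s
        = ∫ s in Set.Ioi (0 : ℝ), (Set.Ici (x / b)).indicator f s := by
          exact setIntegral_congr_fun measurableSet_Ioi (fun s _ => h1 s)
      _ = ∫ s in Set.Ioi (0:ℝ) ∩ Set.Ici (x / b), f s :=
          setIntegral_indicator measurableSet_Ici
      _ = ∫ s in Set.Ici (x / b), f s := by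
          have hsub : Set.Ioi (0:ℝ) ∩ Set.Ici (x / b) = Set.Ici (x / b) :=
            Set.inter_eq_right.mpr (fun s hs => lt_of_lt_of_le ha hs)
          rw [hsub]
      _ = ∫ s in Set.Ioi (x / b), f s := integral_Ici_eq_integral_Ioi
  have step2 : ∫ s in Set.Ioi (x / b), f s
      = ∫ s in Set.Ioi (x / b),
          (x ^ (α - 1) * C) * ((b * s - x) ^ (β - 1) * Real.exp (-(l * s))) := by
    refine setIntegral_congr_fun measurableSet_Ioi (fun s hs => ?_)
    have hs' : x / b < s := hs
    have hs0 : 0 < s := lt_trans ha hs'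
    have hxs : x ≤ b * s := by
      have := (div_lt_iff₀ hb).mp hs'
      linarith [mul_comm s b]
    have hsq : s ^ (α + β - 1) ≠ 0 := (Real.rpow_pos_of_pos hs0 _).ne'
    have e1 : (b * s) ^ (1 - (α + β)) = b ^ (1 - (α + β)) / s ^ (α + β - 1) := by
      rw [Real.mul_rpow hb.le hs0.le, div_eq_mul_inv, ← Real.rpow_neg hs0.le,
        show -(α + β - 1) = 1 - (α + β) by ring]
    simp only [hf, pKer, gammaDen, hC]
    rw [if_pos ⟨hx.le, hxs⟩, e1]
    field_simp
  have step3 : ∫ s in Set.Ioi (x / b), (b * s - x) ^ (β - 1) * Real.exp (-(l * s))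
      = b ^ (β - 1) * Real.exp (-(l * (x / b))) * (Real.Gamma β / l ^ β) := by
    rw [integral_Ioi_shift]
    have : ∫ u in Set.Ioi (0:ℝ),
        (b * (u + x / b) - x) ^ (β - 1) * Real.exp (-(l * (u + x / b)))
        = ∫ u in Set.Ioi (0:ℝ),
            (b ^ (β - 1) * Real.exp (-(l * (x / b)))) *
              (u ^ (β - 1) * Real.exp (-(l * u))) := by
      refine setIntegral_congr_fun measurableSet_Ioi (fun u hu => ?_)
      have hu0 : 0 < u := hu
      have e1 : b * (u + x / b) - x = b * u := by field_simp; ring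
      have e2 : (b * u) ^ (β - 1) = b ^ (β - 1) * u ^ (β - 1) :=
        Real.mul_rpow hb.le hu0.le
      have e3 : Real.exp (-(l * (u + x / b)))
          = Real.exp (-(l * u)) * Real.exp (-(l * (x / b))) := by
        rw [← Real.exp_add]; ring_nf
      rw [e1, e2, e3]; ring
    rw [this, MeasureTheory.integral_const_mul, gamma_int hβ hl]
  have key : C * (b ^ (β - 1) * (Real.Gamma β / l ^ β)) = (l / b) ^ α / Real.Gamma α := by
    have e2' : b ^ (1 - (α + β)) * b ^ (β - 1) * b ^ α = 1 := by
      rw [← Real.rpow_add hb, ← Real.rpow_add hb,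
        show 1 - (α + β) + (β - 1) + α = 0 by ring, Real.rpow_zero]
    have e3 : l ^ (α + β) = l ^ α * l ^ β := Real.rpow_add hl α β
    have hlβ : l ^ β ≠ 0 := (Real.rpow_pos_of_pos hl _).ne'
    have hbα : (0:ℝ) < b ^ α := Real.rpow_pos_of_pos hb _
    rw [hC, e3, Real.div_rpow hl.le hb.le]
    field_simp
    linear_combination e2'
  have eexp : Real.exp (-(l * (x / b))) = Real.exp (-(l / b * x)) := by
    ring_nf
  calc ∫ s in Set.Ioi (0 : ℝ), f s
      = (x ^ (α - 1) * C) *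
          (b ^ (β - 1) * Real.exp (-(l * (x / b))) * (Real.Gamma β / l ^ β)) := by
        rw [step1, step2, MeasureTheory.integral_const_mul, step3]
    _ = (C * (b ^ (β - 1) * (Real.Gamma β / l ^ β))) *
          (x ^ (α - 1) * Real.exp (-(l * (x / b)))) := by ring
    _ = gammaDen (l / b) α x := by
        rw [key, eexp, gammaDen]; ring

/-- If `π₀` is the density of `Γ(λ, q)`, `q = α + β`, then the optimal filter
density `π_n^{y_{1:n}}` is the density of `Γ(λ_n, q)` with
`λ_n = b^{-n} λ + ∑_{j=1}^n b^{j-n} y_j`. -/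
theorem gamma_initial_filter_is_gamma
    (α β b lam : ℝ) (hα : 0 < α) (hβ : 0 < β) (hb : 0 < b) (hlam : 0 < lam)
    (y : ℕ → ℝ) (hy : ∀ j, 1 ≤ j → 0 < y j)
    (π : ℕ → ℝ → ℝ) (c : ℕ → ℝ) (hc : ∀ n, 0 < c (n + 1))
    (hπ0 : ∀ x ∈ Set.Ioi (0 : ℝ), π 0 x = gammaDen lam (α + β) x)
    (hrec : ∀ n, ∀ x ∈ Set.Ioi (0 : ℝ),
      π (n + 1) x =
        gObs β x (y (n + 1)) * (∫ s in Set.Ioi (0 : ℝ), pKer α β b s x * π n s) / c (n + 1))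
    (hnorm : ∀ n, (∫ x in Set.Ioi (0 : ℝ), π (n + 1) x) = 1) :
    ∀ n, 1 ≤ n → ∀ x ∈ Set.Ioi (0 : ℝ),
      π n x =
        gammaDen (lam / b ^ n + ∑ j ∈ Finset.Icc 1 n, y j * b ^ j / b ^ n) (α + β) x := by
  have hq : 0 < α + β := by linarith
  have hΓq : (0:ℝ) < Real.Gamma (α + β) := Real.Gamma_pos_of_pos hq
  have hΓα : (0:ℝ) < Real.Gamma α := Real.Gamma_pos_of_pos hα
  have hΓβ : (0:ℝ) < Real.Gamma β := Real.Gamma_pos_of_pos hβ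
  -- positivity of the rates
  have hΛ : ∀ n : ℕ, 0 < lam / b ^ n + ∑ j ∈ Finset.Icc 1 n, y j * b ^ j / b ^ n := by
    intro n
    have h1 : 0 < lam / b ^ n := div_pos hlam (pow_pos hb n)
    have h2 : (0:ℝ) ≤ ∑ j ∈ Finset.Icc 1 n, y j * b ^ j / b ^ n := by
      refine Finset.sum_nonneg (fun j hj => ?_)
      have hj1 := hy j (Finset.mem_Icc.mp hj).1
      positivity
    linarith
  suffices h : ∀ n, ∀ x ∈ Set.Ioi (0 : ℝ),
      π n x = gammaDen (lam / b ^ n + ∑ j ∈ Finset.Icc 1 n, y j * b ^ j / b ^ n) (α + β) x by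
    exact fun n _ => h n
  intro n
  induction n with
  | zero =>
      intro x hx
      rw [hπ0 x hx]
      norm_num
  | succ n ih =>
      set Λ : ℝ := lam / b ^ n + ∑ j ∈ Finset.Icc 1 n, y j * b ^ j / b ^ n with hΛdef
      have hΛpos : 0 < Λ := hΛ n
      have hyn : 0 < y (n + 1) := hy (n + 1) (by omega)
      set μ : ℝ := Λ / b + y (n + 1) with hμdef
      have hμpos : 0 < μ := by
        have := div_pos hΛpos hb
        simp only [hμdef]; linarith
      set K : ℝ := y (n + 1) ^ (β - 1) * (Λ / b) ^ α /
        (Real.Gamma β * Real.Gamma α * c (n + 1)) with hK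
      -- Claim A: pointwise formula for π (n+1)
      have claimA : ∀ x ∈ Set.Ioi (0:ℝ),
          π (n + 1) x = K * (x ^ (α + β - 1) * Real.exp (-(μ * x))) := by
        intro x hx
        have hx0 : 0 < x := hx
        have hint : (∫ s in Set.Ioi (0:ℝ), pKer α β b s x * π n s)
            = gammaDen (Λ / b) α x := by
          rw [setIntegral_congr_fun measurableSet_Ioi
            (fun s hs => by dsimp only; rw [ih s hs] :
              EqOn (fun s => pKer α β b s x * π n s)
                (fun s => pKer α β b s x * gammaDen Λ (α + β) s) (Set.Ioi 0))]
          exact predict_step α β b Λ x hα hβ hb hΛpos hx0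
        rw [hrec n x hx, hint]
        simp only [gObs, gammaDen, hK]
        have e1 : x ^ β * x ^ (α - 1) = x ^ (α + β - 1) := by
          rw [← Real.rpow_add hx0, show β + (α - 1) = α + β - 1 by ring]
        have e2 : Real.exp (-(x * y (n + 1))) * Real.exp (-(Λ / b * x))
            = Real.exp (-(μ * x)) := by
          rw [← Real.exp_add, hμdef]
          congr 1
          ring
        rw [← e1, ← e2]
        ring
      -- normalization pins down K
      have hμq : (0:ℝ) < μ ^ (α + β) := Real.rpow_pos_of_pos hμpos _
      have hKval : K = μ ^ (α + β) / Real.Gamma (α + β) := by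
        have h1 : (∫ x in Set.Ioi (0:ℝ), π (n + 1) x)
            = K * (Real.Gamma (α + β) / μ ^ (α + β)) := by
          rw [setIntegral_congr_fun measurableSet_Ioi
            (fun x hx => claimA x hx : EqOn (π (n+1))
              (fun x => K * (x ^ (α + β - 1) * Real.exp (-(μ * x)))) (Set.Ioi 0)),
            MeasureTheory.integral_const_mul, gamma_int hq hμpos]
        have h2 := hnorm n
        rw [h1] at h2
        field_simp at h2 ⊢
        linarith
      -- identify the new rate
      have hrate : μ = lam / b ^ (n + 1) +
          ∑ j ∈ Finset.Icc 1 (n + 1), y j * b ^ j / b ^ (n + 1) := by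
        have hbn : (b:ℝ) ^ n ≠ 0 := (pow_pos hb n).ne'
        have hbn1 : (b:ℝ) ^ (n + 1) ≠ 0 := (pow_pos hb (n + 1)).ne'
        rw [Finset.sum_Icc_succ_top (by omega : 1 ≤ n + 1)]
        simp only [hμdef, hΛdef, Finset.sum_div, ← Finset.sum_div] at *
        rw [Finset.sum_div, Finset.sum_div]
        have hsplit : ∀ j, y j * b ^ j / b ^ n / b = y j * b ^ j / b ^ (n + 1) := by
          intro j; rw [pow_succ]; ring
        rw [add_div, Finset.sum_div]
        simp_rw [hsplit]
        have : lam / b ^ n / b = lam / b ^ (n + 1) := by rw [pow_succ]; ring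
        rw [this]
        have : y (n + 1) * b ^ (n + 1) / b ^ (n + 1) = y (n + 1) := by
          field_simp
        rw [this]
        ring
      intro x hx
      rw [claimA x hx, hKval, ← hrate, gammaDen]
      ring
end

section
/- Let π_0 be the density of Γ(λ, q) for some λ > 0, and let π̃_0 be a probability density on (0,∞) such that h_0 = π̃_0/π_0 is Lipschitz continuous and h_0 ≥ H for some constant H > 0. Let π_n^{y_{1:n}} and π̃_n^{y_{1:n}} be the optimal filter densities started from π_0 and π̃_0 respectively. Then for every n ≥ 1, ‖π_n^{y_{1:n}} − π̃_n^{y_{1:n}}‖_var ≤ (√(2q) ‖h_0‖_Lip / (2H)) · (b^n λ_n)^{−1}, where λ_n = b^{−n} λ + Σ_{j=1}^n b^{j−n} y_j. -/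
open MeasureTheory Set

/-- `h` is Lipschitz continuous on `(0, ∞)`. -/
def LipOn (h : ℝ → ℝ) : Prop :=
  ∃ K : ℝ, 0 ≤ K ∧ ∀ x ∈ Set.Ioi (0 : ℝ), ∀ y ∈ Set.Ioi (0 : ℝ), |h x - h y| ≤ K * |x - y|

/-- The smallest Lipschitz constant of `h : (0, ∞) → ℝ`. -/
noncomputable def lipNorm (h : ℝ → ℝ) : ℝ :=
  sInf {K : ℝ | 0 ≤ K ∧ ∀ x ∈ Set.Ioi (0 : ℝ), ∀ y ∈ Set.Ioi (0 : ℝ), |h x - h y| ≤ K * |x - y|}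

/-- Total variation distance between probability densities on `(0, ∞)`. -/
noncomputable def tvDist (f g : ℝ → ℝ) : ℝ :=
  (1 / 2) * ∫ x in Set.Ioi (0 : ℝ), |f x - g x|

/-! ### Auxiliary lemmas -/

lemma gammaDen_pos {lam r x : ℝ} (hl : 0 < lam) (hr : 0 < r) (hx : 0 < x) :
    0 < gammaDen lam r x := by
  unfold gammaDen
  have := Real.Gamma_pos_of_pos hr
  positivity

lemma integrableOn_gammaDen {lam r : ℝ} (hl : 0 < lam) (hr : 0 < r) :
    IntegrableOn (gammaDen lam r) (Ioi (0:ℝ)) := by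
  have h1 : IntegrableOn (fun x : ℝ => x ^ (r-1) * Real.exp (-lam * x ^ (1:ℝ))) (Ioi 0) :=
    integrableOn_rpow_mul_exp_neg_mul_rpow (by linarith) zero_lt_one hl
  have h2 : IntegrableOn (fun x : ℝ => x ^ (r-1) * Real.exp (-(lam * x))) (Ioi 0) := by
    refine h1.congr_fun (fun x hx => ?_) measurableSet_Ioi
    beta_reduce
    rw [Real.rpow_one, neg_mul]
  have h3 : IntegrableOn
      (fun x : ℝ => (lam ^ r / Real.Gamma r) * (x ^ (r-1) * Real.exp (-(lam * x)))) (Ioi 0) :=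
    h2.const_mul _
  refine h3.congr_fun (fun x hx => ?_) measurableSet_Ioi
  unfold gammaDen; ring

lemma integral_gammaDen {lam r : ℝ} (hl : 0 < lam) (hr : 0 < r) :
    ∫ x in Ioi (0:ℝ), gammaDen lam r x = 1 := by
  have h : ∀ x ∈ Ioi (0:ℝ), gammaDen lam r x
      = (lam ^ r / Real.Gamma r) * (x ^ (r-1) * Real.exp (-(lam * x))) := by
    intro x _; unfold gammaDen; ring
  rw [setIntegral_congr_fun measurableSet_Ioi h, integral_const_mul,
    Real.integral_rpow_mul_exp_neg_mul_Ioi hr hl]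
  have hG := Real.Gamma_pos_of_pos hr
  have hlr : (0:ℝ) < lam ^ r := Real.rpow_pos_of_pos hl r
  rw [one_div, Real.inv_rpow hl.le]
  field_simp

lemma continuousOn_gammaDen {lam r : ℝ} : ContinuousOn (gammaDen lam r) (Ioi (0:ℝ)) := by
  have h1 : ContinuousOn (fun x : ℝ => x ^ (r-1)) (Ioi 0) :=
    fun x hx => (continuousWithinAt_id.rpow_const (Or.inl (ne_of_gt hx)))
  have h2 : Continuous (fun x : ℝ => Real.exp (-(lam * x))) := by fun_prop
  exact ((continuousOn_const.mul h1).mul h2.continuousOn).div_const _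

lemma gammaDen_shift {lam r : ℝ} (hl : 0 < lam) (hr : 0 < r) {x : ℝ} (hx : 0 < x) :
    x * gammaDen lam r x = (r / lam) * gammaDen lam (r + 1) x := by
  unfold gammaDen
  have hΓ : Real.Gamma (r + 1) = r * Real.Gamma r := Real.Gamma_add_one (ne_of_gt hr)
  have hpow : x ^ (r + 1 - 1) = x ^ (r - 1) * x := by
    rw [← Real.rpow_add_one (ne_of_gt hx)]; ring_nf
  have hpl : lam ^ (r + 1) = lam ^ r * lam := by
    rw [← Real.rpow_add_one (ne_of_gt hl)]
  rw [hΓ, hpow, hpl]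
  have := Real.Gamma_pos_of_pos hr
  field_simp

lemma integrableOn_id_mul_gammaDen {lam r : ℝ} (hl : 0 < lam) (hr : 0 < r) :
    IntegrableOn (fun x => x * gammaDen lam r x) (Ioi (0:ℝ)) := by
  have h3 : IntegrableOn (fun x => (r / lam) * gammaDen lam (r+1) x) (Ioi (0:ℝ)) :=
    (integrableOn_gammaDen hl (by linarith : (0:ℝ) < r + 1)).const_mul (r / lam)
  exact h3.congr_fun (fun x hx => (gammaDen_shift hl hr hx).symm) measurableSet_Ioi

lemma integral_id_mul_gammaDen {lam r : ℝ} (hl : 0 < lam) (hr : 0 < r) :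
    ∫ x in Ioi (0:ℝ), x * gammaDen lam r x = r / lam := by
  rw [setIntegral_congr_fun measurableSet_Ioi
    (fun x hx => gammaDen_shift hl hr (mem_Ioi.mp hx)), integral_const_mul,
    integral_gammaDen hl (by linarith : (0:ℝ) < r + 1), mul_one]

lemma sq_mul_gammaDen {lam r : ℝ} (hl : 0 < lam) (hr : 0 < r) {x : ℝ} (hx : 0 < x) :
    x ^ 2 * gammaDen lam r x = (r * (r+1) / lam ^ 2) * gammaDen lam (r + 2) x := by
  have h1 := gammaDen_shift hl hr hx
  have h2 := gammaDen_shift hl (by linarith : (0:ℝ) < r + 1) hx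
  have e : x ^ 2 * gammaDen lam r x = (r / lam) * (x * gammaDen lam (r+1) x) := by
    rw [pow_two, mul_assoc, h1]; ring
  rw [e, h2, show r + 1 + 1 = r + 2 from by ring]
  field_simp

lemma integrableOn_sq_mul_gammaDen {lam r : ℝ} (hl : 0 < lam) (hr : 0 < r) :
    IntegrableOn (fun x => x ^ 2 * gammaDen lam r x) (Ioi (0:ℝ)) := by
  have h3 : IntegrableOn (fun x => (r * (r+1) / lam ^ 2) * gammaDen lam (r+2) x) (Ioi (0:ℝ)) :=
    (integrableOn_gammaDen hl (by linarith : (0:ℝ) < r + 2)).const_mul _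
  exact h3.congr_fun (fun x hx => (sq_mul_gammaDen hl hr hx).symm) measurableSet_Ioi

lemma integral_sq_mul_gammaDen {lam r : ℝ} (hl : 0 < lam) (hr : 0 < r) :
    ∫ x in Ioi (0:ℝ), x ^ 2 * gammaDen lam r x = r * (r+1) / lam ^ 2 := by
  rw [setIntegral_congr_fun measurableSet_Ioi
    (fun x hx => sq_mul_gammaDen hl hr (mem_Ioi.mp hx)), integral_const_mul,
    integral_gammaDen hl (by linarith : (0:ℝ) < r + 2), mul_one]

/-- domination: `gammaDen * φ` integrable when `|φ| ≤ C + D x`. -/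
lemma integrableOn_gammaDen_mul {lam r : ℝ} (hl : 0 < lam) (hr : 0 < r) {φ : ℝ → ℝ}
    (hm : AEStronglyMeasurable φ (volume.restrict (Ioi 0)))
    {C D : ℝ} (hbd : ∀ x ∈ Ioi (0:ℝ), |φ x| ≤ C + D * x) :
    IntegrableOn (fun x => gammaDen lam r x * φ x) (Ioi (0:ℝ)) := by
  have hg : Integrable (fun x => C * gammaDen lam r x + D * (x * gammaDen lam r x))
      (volume.restrict (Ioi 0)) :=
    ((integrableOn_gammaDen hl hr).const_mul C).add
      ((integrableOn_id_mul_gammaDen hl hr).const_mul D)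
  refine hg.mono' ((continuousOn_gammaDen.aestronglyMeasurable measurableSet_Ioi).mul hm) ?_
  refine (ae_restrict_iff' measurableSet_Ioi).2 (ae_of_all _ (fun x hx => ?_))
  have hgx := (gammaDen_pos hl hr (mem_Ioi.mp hx)).le
  have := hbd x hx
  calc ‖gammaDen lam r x * φ x‖ = gammaDen lam r x * |φ x| := by
        rw [norm_mul, Real.norm_eq_abs, Real.norm_eq_abs, abs_of_nonneg hgx]
    _ ≤ gammaDen lam r x * (C + D * x) := by
        exact mul_le_mul_of_nonneg_left this hgx
    _ = C * gammaDen lam r x + D * (x * gammaDen lam r x) := by ring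

/-- Cauchy-Schwarz for a probability weight on `(0,∞)`. -/
lemma sq_setIntegral_le {w φ : ℝ → ℝ} (hw0 : ∀ x ∈ Ioi (0:ℝ), 0 ≤ w x)
    (hw1 : ∫ x in Ioi (0:ℝ), w x = 1) (hwi : IntegrableOn w (Ioi (0:ℝ)))
    (h1 : IntegrableOn (fun x => w x * φ x) (Ioi (0:ℝ)))
    (h2 : IntegrableOn (fun x => w x * φ x ^ 2) (Ioi (0:ℝ))) :
    (∫ x in Ioi (0:ℝ), w x * φ x) ^ 2 ≤ ∫ x in Ioi (0:ℝ), w x * φ x ^ 2 := by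
  set m := ∫ x in Ioi (0:ℝ), w x * φ x with hm
  have hnn : 0 ≤ ∫ x in Ioi (0:ℝ), w x * (φ x - m) ^ 2 :=
    setIntegral_nonneg measurableSet_Ioi (fun x hx => mul_nonneg (hw0 x hx) (sq_nonneg _))
  have hexp : ∀ x, w x * (φ x - m) ^ 2
      = w x * φ x ^ 2 - (2*m) * (w x * φ x) + m ^ 2 * w x := by intro x; ring
  rw [show (fun x => w x * (φ x - m)^2)
      = fun x => w x * φ x ^ 2 - (2*m) * (w x * φ x) + m ^ 2 * w x from funext hexp] at hnn
  have hA : Integrable (fun x => w x * φ x ^ 2 - (2*m) * (w x * φ x))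
      (volume.restrict (Ioi 0)) := h2.sub (h1.const_mul _)
  have hB : Integrable (fun x => m ^ 2 * w x) (volume.restrict (Ioi 0)) := hwi.const_mul _
  have hC : Integrable (fun x => (2*m) * (w x * φ x)) (volume.restrict (Ioi 0)) :=
    h1.const_mul _
  rw [integral_add hA hB, integral_sub h2 hC, integral_const_mul, integral_const_mul, hw1] at hnn
  nlinarith [hnn]

/-- translation of a set integral. -/
lemma setIntegral_Ici_comp_sub (Φ : ℝ → ℝ) (c : ℝ) :
    ∫ s in Ici c, Φ (s - c) = ∫ t in Ici (0:ℝ), Φ t := by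
  rw [← integral_indicator measurableSet_Ici, ← integral_indicator measurableSet_Ici]
  have : (Ici c).indicator (fun s => Φ (s - c)) = fun s => (Ici (0:ℝ)).indicator Φ (s - c) := by
    funext s
    by_cases h : s ∈ Ici c
    · rw [indicator_of_mem h, indicator_of_mem (by simpa [mem_Ici, sub_nonneg] using h)]
    · rw [indicator_of_notMem h, indicator_of_notMem (by simpa [mem_Ici, sub_nonneg] using h)]
  rw [this]
  exact integral_sub_right_eq_self ((Ici (0:ℝ)).indicator Φ) c

lemma continuousOn_of_lip {h : ℝ → ℝ} {K : ℝ} (hK : 0 ≤ K)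
    (hl : ∀ x ∈ Ioi (0:ℝ), ∀ y ∈ Ioi (0:ℝ), |h x - h y| ≤ K * |x - y|) :
    ContinuousOn h (Ioi (0:ℝ)) := by
  have : LipschitzOnWith (Real.toNNReal K) h (Ioi 0) := by
    rw [lipschitzOnWith_iff_dist_le_mul]
    intro x hx y hy
    rw [Real.dist_eq, Real.dist_eq]
    simpa [Real.coe_toNNReal K hK] using hl x hx y hy
  exact this.continuousOn

lemma pKer_mul_gammaDen {α β b μ : ℝ} (hα : 0 < α) (hβ : 0 < β) (hb : 0 < b) (hμ : 0 < μ)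
    {x : ℝ} (hx : 0 < x) (s : ℝ) :
    pKer α β b s x * gammaDen μ (α + β) s =
      if x / b ≤ s then gammaDen (μ / b) α x * gammaDen μ β (s - x / b) else 0 := by
  unfold pKer gammaDen
  have hiff : (0 ≤ x ∧ x ≤ b * s) ↔ x / b ≤ s := by
    constructor
    · rintro ⟨-, h⟩; exact (div_le_iff₀' hb).2 h
    · intro h; exact ⟨hx.le, (div_le_iff₀' hb).1 h⟩
  by_cases hcond : x / b ≤ s
  · rw [if_pos (hiff.2 hcond), if_pos hcond]
    have hs : 0 < s := lt_of_lt_of_le (div_pos hx hb) hcond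
    have hsc : 0 ≤ s - x / b := sub_nonneg.2 hcond
    have hΓα := Real.Gamma_pos_of_pos hα
    have hΓβ := Real.Gamma_pos_of_pos hβ
    have hΓq := Real.Gamma_pos_of_pos (by linarith : (0:ℝ) < α + β)
    have hΓα' := hΓα.ne'
    have e2 : b * s - x = b * (s - x / b) := by field_simp
    have e3 : (b * (s - x / b)) ^ (β - 1) = b ^ (β - 1) * (s - x / b) ^ (β - 1) :=
      Real.mul_rpow hb.le hsc
    have e1 : (b * s) ^ (1 - (α + β)) = b ^ (1 - (α + β)) * s ^ (1 - (α + β)) :=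
      Real.mul_rpow hb.le hs.le
    have e4 : (μ / b) ^ α = μ ^ α * (b ^ α)⁻¹ := by
      rw [div_eq_mul_inv, Real.mul_rpow hμ.le (inv_nonneg.2 hb.le), Real.inv_rpow hb.le]
    have e5 : μ ^ (α + β) = μ ^ α * μ ^ β := Real.rpow_add hμ α β
    have e6 : Real.exp (-(μ * s)) = Real.exp (-(μ / b * x)) * Real.exp (-(μ * (s - x / b))) := by
      rw [← Real.exp_add]; congr 1; field_simp; ring
    have eS1 : s ^ (1 - (α + β)) = (s ^ (α + β - 1))⁻¹ := by
      rw [show (1 - (α + β)) = -(α + β - 1) from by ring, Real.rpow_neg hs.le]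
    have eB1 : b ^ (1 - (α + β)) = (b ^ (β - 1))⁻¹ * (b ^ α)⁻¹ := by
      rw [show (1 - (α + β)) = (-(β - 1)) + (-α) from by ring, Real.rpow_add hb,
        Real.rpow_neg hb.le, Real.rpow_neg hb.le]
    rw [e2, e3, e1, e4, e5, e6, eS1, eB1]
    have hS2 : (0:ℝ) < s ^ (α + β - 1) := Real.rpow_pos_of_pos hs _
    have hB2 : (0:ℝ) < b ^ (β - 1) := Real.rpow_pos_of_pos hb _
    have hB3 : (0:ℝ) < b ^ α := Real.rpow_pos_of_pos hb _
    generalize Real.exp (-(μ / b * x)) = E1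
    generalize Real.exp (-(μ * (s - x / b))) = E2
    generalize x ^ (α - 1) = X
    generalize (s - x / b) ^ (β - 1) = T
    field_simp
  · rw [if_neg (fun h => hcond (hiff.1 h)), if_neg hcond, zero_mul]

lemma transition_integral {α β b μ : ℝ} (hα : 0 < α) (hβ : 0 < β) (hb : 0 < b) (hμ : 0 < μ)
    {x : ℝ} (hx : 0 < x) (h : ℝ → ℝ) :
    ∫ s in Ioi (0:ℝ), pKer α β b s x * gammaDen μ (α + β) s * h s
      = gammaDen (μ / b) α x * ∫ t in Ioi (0:ℝ), gammaDen μ β t * h (x / b + t) := by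
  have hc : 0 < x / b := div_pos hx hb
  have key : ∀ s ∈ Ioi (0:ℝ), pKer α β b s x * gammaDen μ (α + β) s * h s
      = (Ici (x/b)).indicator
          (fun s => gammaDen (μ/b) α x * (gammaDen μ β (s - x/b) * h s)) s := by
    intro s _
    rw [pKer_mul_gammaDen hα hβ hb hμ hx s]
    by_cases hcs : x / b ≤ s
    · rw [if_pos hcs, indicator_of_mem (mem_Ici.2 hcs)]; ring
    · rw [if_neg hcs, indicator_of_notMem (fun hmem => hcs (mem_Ici.1 hmem)), zero_mul]
  have hsub : Ici (x/b) ∩ Ioi (0:ℝ) = Ici (x/b) := by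
    refine inter_eq_left.mpr (fun t ht => ?_)
    exact lt_of_lt_of_le hc (mem_Ici.1 ht)
  rw [setIntegral_congr_fun measurableSet_Ioi key, integral_indicator measurableSet_Ici,
    Measure.restrict_restrict measurableSet_Ici, hsub]
  calc ∫ s in Ici (x/b), gammaDen (μ/b) α x * (gammaDen μ β (s - x/b) * h s)
      = ∫ s in Ici (x/b),
          (fun t => gammaDen (μ/b) α x * (gammaDen μ β t * h (x/b + t))) (s - x/b) := by
        refine setIntegral_congr_fun measurableSet_Ici (fun s _ => ?_)
        simp only []
        rw [show x/b + (s - x/b) = s from by ring]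
    _ = ∫ t in Ici (0:ℝ), gammaDen (μ/b) α x * (gammaDen μ β t * h (x/b + t)) := by
        exact setIntegral_Ici_comp_sub
          (fun t => gammaDen (μ/b) α x * (gammaDen μ β t * h (x/b + t))) (x/b)
    _ = ∫ t in Ioi (0:ℝ), gammaDen (μ/b) α x * (gammaDen μ β t * h (x/b + t)) :=
        integral_Ici_eq_integral_Ioi
    _ = gammaDen (μ/b) α x * ∫ t in Ioi (0:ℝ), gammaDen μ β t * h (x/b + t) :=
        integral_const_mul _ _

lemma gObs_mul_gammaDen {α β ν yv : ℝ} (hα : 0 < α) (hβ : 0 < β) (hν : 0 < ν) (hy : 0 < yv)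
    {x : ℝ} (hx : 0 < x) :
    gObs β x yv * gammaDen ν α x
      = (yv ^ (β - 1) * ν ^ α * Real.Gamma (α + β) /
          (Real.Gamma α * Real.Gamma β * (ν + yv) ^ (α + β))) * gammaDen (ν + yv) (α + β) x := by
  unfold gObs gammaDen
  have e1 : x ^ β * x ^ (α - 1) = x ^ (α + β - 1) := by
    rw [← Real.rpow_add hx, show β + (α - 1) = α + β - 1 from by ring]
  have e2 : Real.exp (-(x * yv)) * Real.exp (-(ν * x)) = Real.exp (-((ν + yv) * x)) := by
    rw [← Real.exp_add, show -(x * yv) + -(ν * x) = -((ν + yv) * x) from by ring]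
  have hΓα := Real.Gamma_pos_of_pos hα
  have hΓβ := Real.Gamma_pos_of_pos hβ
  have hΓq := Real.Gamma_pos_of_pos (by linarith : (0:ℝ) < α + β)
  have hνy : (0:ℝ) < (ν + yv) ^ (α + β) := Real.rpow_pos_of_pos (by linarith) _
  calc x ^ β * yv ^ (β-1) * Real.exp (-(x * yv)) / Real.Gamma β *
        (ν ^ α * x ^ (α-1) * Real.exp (-(ν * x)) / Real.Gamma α)
      = yv ^ (β-1) * ν ^ α * (x ^ β * x ^ (α-1)) *
          (Real.exp (-(x * yv)) * Real.exp (-(ν * x))) / (Real.Gamma α * Real.Gamma β) := by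
        ring
    _ = yv ^ (β-1) * ν ^ α * x ^ (α + β - 1) * Real.exp (-((ν + yv) * x)) /
          (Real.Gamma α * Real.Gamma β) := by rw [e1, e2]
    _ = (yv ^ (β-1) * ν ^ α * Real.Gamma (α+β) /
          (Real.Gamma α * Real.Gamma β * (ν + yv) ^ (α + β))) *
          ((ν + yv) ^ (α + β) * x ^ (α + β - 1) * Real.exp (-((ν + yv) * x)) /
            Real.Gamma (α + β)) := by
        field_simp

lemma const_rearrange {s K H bn L : ℝ} (hH : H ≠ 0) (hbn : bn ≠ 0) (hL : L ≠ 0) :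
    s * K / (2*H) * (bn * L)⁻¹ = (1/2 : ℝ) * (H⁻¹ * (K / bn * (s / L))) := by
  field_simp

/-- the sequence of rate parameters of the conjugate filter. -/
noncomputable def lamSeq (lam b : ℝ) (y : ℕ → ℝ) : ℕ → ℝ
  | 0 => lam
  | n+1 => lamSeq lam b y n / b + y (n+1)

/-- the sequence of likelihood-ratio functions. -/
noncomputable def hSeq (β lam b : ℝ) (y : ℕ → ℝ) (h0 : ℝ → ℝ) : ℕ → ℝ → ℝ
  | 0 => h0
  | n+1 => fun x => ∫ t in Ioi (0:ℝ),
      gammaDen (lamSeq lam b y n) β t * hSeq β lam b y h0 n (x / b + t)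

/-- Stability estimate (8): starting from a `Γ(λ, q)` initial density `π₀` and a
true initial density `π̃₀` with `π₀`-density `h₀` Lipschitz and bounded below by
`H > 0`, the filters satisfy
`‖π_n - π̃_n‖_var ≤ (√(2q) ‖h₀‖_Lip / (2H)) (bⁿ λ_n)⁻¹`. -/
theorem gamma_initial_stability_bound
    (α β b lam H : ℝ) (hα : 0 < α) (hβ : 0 < β) (hb : 0 < b) (hlam : 0 < lam) (hH : 0 < H)
    (y : ℕ → ℝ) (hy : ∀ j, 1 ≤ j → 0 < y j)
    (π0t : ℝ → ℝ) (hπ0t_nonneg : ∀ x ∈ Set.Ioi (0 : ℝ), 0 ≤ π0t x)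
    (hπ0t_norm : (∫ x in Set.Ioi (0 : ℝ), π0t x) = 1)
    (hLip : LipOn fun x => π0t x / gammaDen lam (α + β) x)
    (hlow : ∀ x ∈ Set.Ioi (0 : ℝ), H ≤ π0t x / gammaDen lam (α + β) x)
    (π πt : ℕ → ℝ → ℝ) (c ct : ℕ → ℝ)
    (hc : ∀ n, 0 < c (n + 1)) (hct : ∀ n, 0 < ct (n + 1))
    (hπ0 : ∀ x ∈ Set.Ioi (0 : ℝ), π 0 x = gammaDen lam (α + β) x)
    (hπt0 : ∀ x ∈ Set.Ioi (0 : ℝ), πt 0 x = π0t x)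
    (hrec : ∀ n, ∀ x ∈ Set.Ioi (0 : ℝ),
      π (n + 1) x =
        gObs β x (y (n + 1)) * (∫ s in Set.Ioi (0 : ℝ), pKer α β b s x * π n s) / c (n + 1))
    (hrect : ∀ n, ∀ x ∈ Set.Ioi (0 : ℝ),
      πt (n + 1) x =
        gObs β x (y (n + 1)) * (∫ s in Set.Ioi (0 : ℝ), pKer α β b s x * πt n s) / ct (n + 1))
    (hnorm : ∀ n, (∫ x in Set.Ioi (0 : ℝ), π (n + 1) x) = 1)
    (hnormt : ∀ n, (∫ x in Set.Ioi (0 : ℝ), πt (n + 1) x) = 1) :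
    ∀ n, 1 ≤ n →
      tvDist (π n) (πt n) ≤
        Real.sqrt (2 * (α + β)) * lipNorm (fun x => π0t x / gammaDen lam (α + β) x) / (2 * H) *
          (b ^ n * (lam / b ^ n + ∑ j ∈ Finset.Icc 1 n, y j * b ^ j / b ^ n))⁻¹ := by
  have hq : (0:ℝ) < α + β := by linarith
  set h0 : ℝ → ℝ := fun x => π0t x / gammaDen lam (α + β) x with hh0
  set K : ℝ := lipNorm h0 with hKdef
  -- lipNorm facts
  have hSne : Set.Nonempty {K : ℝ | 0 ≤ K ∧ ∀ x ∈ Set.Ioi (0 : ℝ), ∀ y ∈ Set.Ioi (0 : ℝ),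
      |h0 x - h0 y| ≤ K * |x - y|} := hLip
  have hSbdd : BddBelow {K : ℝ | 0 ≤ K ∧ ∀ x ∈ Set.Ioi (0 : ℝ), ∀ y ∈ Set.Ioi (0 : ℝ),
      |h0 x - h0 y| ≤ K * |x - y|} := ⟨0, fun K hK => hK.1⟩
  have hK0 : 0 ≤ K := le_csInf hSne (fun bK hbK => hbK.1)
  have hKlip : ∀ x ∈ Ioi (0:ℝ), ∀ x' ∈ Ioi (0:ℝ), |h0 x - h0 x'| ≤ K * |x - x'| := by
    intro x hx x' hx'
    rcases eq_or_ne x x' with rfl | hne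
    · simp
    · have hpos : 0 < |x - x'| := abs_pos.2 (sub_ne_zero.2 hne)
      have : |h0 x - h0 x'| / |x - x'| ≤ K :=
        le_csInf hSne (fun bK hbK => (div_le_iff₀ hpos).2 (hbK.2 x hx x' hx'))
      calc |h0 x - h0 x'| = |h0 x - h0 x'| / |x - x'| * |x - x'| := by field_simp
        _ ≤ K * |x - x'| := mul_le_mul_of_nonneg_right this hpos.le
  -- lamSeq facts
  have hL : ∀ n, 0 < lamSeq lam b y n := by
    intro n; induction n with
    | zero => exact hlam
    | succ n ih => exact add_pos (div_pos ih hb) (hy (n+1) (by omega))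
  have hbn : ∀ n : ℕ, (0:ℝ) < b ^ n := fun n => pow_pos hb n
  -- abbreviation
  set hs : ℕ → ℝ → ℝ := hSeq β lam b y h0 with hhs
  have hs0 : hs 0 = h0 := rfl
  have hssucc : ∀ n x, hs (n+1) x
      = ∫ t in Ioi (0:ℝ), gammaDen (lamSeq lam b y n) β t * hs n (x / b + t) := fun n x => rfl
  -- properties of hs
  have hprops : ∀ n, (∀ x ∈ Ioi (0:ℝ), H ≤ hs n x) ∧
      (∀ x ∈ Ioi (0:ℝ), ∀ x' ∈ Ioi (0:ℝ), |hs n x - hs n x'| ≤ K / b ^ n * |x - x'|) := by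
    intro n
    induction n with
    | zero =>
      refine ⟨hlow, fun x hx x' hx' => ?_⟩
      rw [hs0]
      simpa using hKlip x hx x' hx'
    | succ n ih =>
      obtain ⟨ihH, ihLip⟩ := ih
      have hKn : (0:ℝ) ≤ K / b ^ n := div_nonneg hK0 (hbn n).le
      have hcont : ContinuousOn (hs n) (Ioi 0) := continuousOn_of_lip hKn ihLip
      have ihbd : ∀ u ∈ Ioi (0:ℝ), |hs n u| ≤ (hs n 1 + K / b ^ n) + (K / b ^ n) * u := by
        intro u hu
        have h1 : (1:ℝ) ∈ Ioi (0:ℝ) := by norm_num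
        have hl := ihLip u hu 1 h1
        have hH' := ihH u hu
        have habs : |u - 1| ≤ u + 1 := by
          rw [abs_le]; constructor <;> [linarith [mem_Ioi.mp hu]; linarith]
        have : hs n u - hs n 1 ≤ K / b ^ n * (u + 1) := by
          calc hs n u - hs n 1 ≤ |hs n u - hs n 1| := le_abs_self _
            _ ≤ K / b ^ n * |u - 1| := hl
            _ ≤ K / b ^ n * (u + 1) := mul_le_mul_of_nonneg_left habs hKn
        rw [abs_of_pos (lt_of_lt_of_le hH hH')]
        nlinarith
      -- integrability of the defining integrand
      have hint : ∀ a : ℝ, 0 < a →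
          IntegrableOn (fun t => gammaDen (lamSeq lam b y n) β t * hs n (a + t)) (Ioi 0) := by
        intro a ha
        refine integrableOn_gammaDen_mul (hL n) hβ ?_
          (C := (hs n 1 + K / b ^ n) + (K / b ^ n) * a) (D := K / b ^ n) ?_
        · refine (ContinuousOn.comp hcont ((continuous_const.add continuous_id).continuousOn)
            (fun t ht => ?_)).aestronglyMeasurable measurableSet_Ioi
          exact add_pos ha (mem_Ioi.mp ht)
        · intro t ht
          have := ihbd (a + t) (add_pos ha (mem_Ioi.mp ht))
          linarith [this]
      constructor
      · intro x hx
        have ha : 0 < x / b := div_pos (mem_Ioi.mp hx) hb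
        rw [hssucc]
        have hmono : ∫ t in Ioi (0:ℝ), gammaDen (lamSeq lam b y n) β t * H
            ≤ ∫ t in Ioi (0:ℝ), gammaDen (lamSeq lam b y n) β t * hs n (x / b + t) := by
          refine setIntegral_mono_on ((integrableOn_gammaDen (hL n) hβ).mul_const H)
            (hint _ ha) measurableSet_Ioi (fun t ht => ?_)
          exact mul_le_mul_of_nonneg_left (ihH _ (add_pos ha (mem_Ioi.mp ht)))
            (gammaDen_pos (hL n) hβ (mem_Ioi.mp ht)).le
        rw [integral_mul_const, integral_gammaDen (hL n) hβ, one_mul] at hmono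
        exact hmono
      · intro x hx x' hx'
        have ha : 0 < x / b := div_pos (mem_Ioi.mp hx) hb
        have ha' : 0 < x' / b := div_pos (mem_Ioi.mp hx') hb
        rw [hssucc, hssucc, ← integral_sub (hint _ ha) (hint _ ha')]
        have step1 : |∫ t in Ioi (0:ℝ), (gammaDen (lamSeq lam b y n) β t * hs n (x / b + t)
            - gammaDen (lamSeq lam b y n) β t * hs n (x' / b + t))|
            ≤ ∫ t in Ioi (0:ℝ), |gammaDen (lamSeq lam b y n) β t * hs n (x / b + t)
            - gammaDen (lamSeq lam b y n) β t * hs n (x' / b + t)| := by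
          simpa [Real.norm_eq_abs] using norm_integral_le_integral_norm
            (μ := volume.restrict (Ioi 0))
            (fun t => gammaDen (lamSeq lam b y n) β t * hs n (x / b + t)
              - gammaDen (lamSeq lam b y n) β t * hs n (x' / b + t))
        refine step1.trans ?_
        have step2 : ∫ t in Ioi (0:ℝ), |gammaDen (lamSeq lam b y n) β t * hs n (x / b + t)
            - gammaDen (lamSeq lam b y n) β t * hs n (x' / b + t)|
            ≤ ∫ t in Ioi (0:ℝ), gammaDen (lamSeq lam b y n) β t * (K / b ^ n * (|x - x'| / b)) := by
          refine setIntegral_mono_on ((hint _ ha).sub (hint _ ha')).abs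
            ((integrableOn_gammaDen (hL n) hβ).mul_const _) measurableSet_Ioi (fun t ht => ?_)
          have htp := mem_Ioi.mp ht
          have hgt := (gammaDen_pos (hL n) hβ htp).le
          rw [← mul_sub, abs_mul, abs_of_nonneg hgt]
          refine mul_le_mul_of_nonneg_left ?_ hgt
          have := ihLip (x / b + t) (add_pos ha htp) (x' / b + t) (add_pos ha' htp)
          calc |hs n (x / b + t) - hs n (x' / b + t)|
              ≤ K / b ^ n * |x / b + t - (x' / b + t)| := this
            _ = K / b ^ n * (|x - x'| / b) := by
                rw [show x / b + t - (x' / b + t) = (x - x') / b from by ring,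
                  abs_div, abs_of_pos hb]
        refine step2.trans ?_
        rw [integral_mul_const, integral_gammaDen (hL n) hβ, one_mul]
        rw [show K / b ^ (n+1) = K / b ^ n / b from by rw [pow_succ]; ring]
        exact le_of_eq (by ring)
  -- global facts about hs
  have hbd : ∀ n, ∀ u ∈ Ioi (0:ℝ), |hs n u| ≤ (hs n 1 + K / b ^ n) + (K / b ^ n) * u := by
    intro n u hu
    obtain ⟨ihH, ihLip⟩ := hprops n
    have hKn : (0:ℝ) ≤ K / b ^ n := div_nonneg hK0 (hbn n).le
    have h1 : (1:ℝ) ∈ Ioi (0:ℝ) := by norm_num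
    have hl := ihLip u hu 1 h1
    have hH' := ihH u hu
    have habs : |u - 1| ≤ u + 1 := by
      rw [abs_le]; constructor <;> [linarith [mem_Ioi.mp hu]; linarith]
    have : hs n u - hs n 1 ≤ K / b ^ n * (u + 1) := by
      calc hs n u - hs n 1 ≤ |hs n u - hs n 1| := le_abs_self _
        _ ≤ K / b ^ n * |u - 1| := hl
        _ ≤ K / b ^ n * (u + 1) := mul_le_mul_of_nonneg_left habs hKn
    rw [abs_of_pos (lt_of_lt_of_le hH hH')]
    nlinarith
  have hscont : ∀ n, ContinuousOn (hs n) (Ioi 0) :=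
    fun n => continuousOn_of_lip (div_nonneg hK0 (hbn n).le) (hprops n).2
  have hZint : ∀ n, ∀ (μ' r : ℝ), 0 < μ' → 0 < r →
      IntegrableOn (fun x => gammaDen μ' r x * hs n x) (Ioi 0) := by
    intro n μ' r hμ' hr
    exact integrableOn_gammaDen_mul hμ' hr
      (((hscont n)).aestronglyMeasurable measurableSet_Ioi) (hbd n)
  have hZlow : ∀ n, H ≤ ∫ u in Ioi (0:ℝ), gammaDen (lamSeq lam b y n) (α+β) u * hs n u := by
    intro n
    have hmono : ∫ u in Ioi (0:ℝ), gammaDen (lamSeq lam b y n) (α+β) u * H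
        ≤ ∫ u in Ioi (0:ℝ), gammaDen (lamSeq lam b y n) (α+β) u * hs n u := by
      refine setIntegral_mono_on ((integrableOn_gammaDen (hL n) hq).mul_const H)
        (hZint n _ _ (hL n) hq) measurableSet_Ioi (fun u hu => ?_)
      exact mul_le_mul_of_nonneg_left ((hprops n).1 u hu)
        (gammaDen_pos (hL n) hq (mem_Ioi.mp hu)).le
    rwa [integral_mul_const, integral_gammaDen (hL n) hq, one_mul] at hmono
  have hZpos : ∀ n, 0 < ∫ u in Ioi (0:ℝ), gammaDen (lamSeq lam b y n) (α+β) u * hs n u :=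
    fun n => lt_of_lt_of_le hH (hZlow n)
  -- the main invariant
  have inv : ∀ n, (∀ x ∈ Ioi (0:ℝ), π n x = gammaDen (lamSeq lam b y n) (α+β) x) ∧
      (∀ x ∈ Ioi (0:ℝ), πt n x = gammaDen (lamSeq lam b y n) (α+β) x * hs n x /
        (∫ u in Ioi (0:ℝ), gammaDen (lamSeq lam b y n) (α+β) u * hs n u)) := by
    intro n
    induction n with
    | zero =>
      constructor
      · exact hπ0
      · intro x hx
        have hpt : ∀ u ∈ Ioi (0:ℝ), gammaDen (lamSeq lam b y 0) (α+β) u * hs 0 u = π0t u := by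
          intro u hu
          have hgu := (gammaDen_pos hlam hq (mem_Ioi.mp hu)).ne'
          show gammaDen lam (α+β) u * (π0t u / gammaDen lam (α+β) u) = π0t u
          field_simp
        have hZ0 : (∫ u in Ioi (0:ℝ), gammaDen (lamSeq lam b y 0) (α+β) u * hs 0 u) = 1 := by
          rw [setIntegral_congr_fun measurableSet_Ioi hpt, hπ0t_norm]
        rw [hZ0, div_one, hpt x hx, hπt0 x hx]
    | succ n ih =>
      obtain ⟨ihπ, ihπt⟩ := ih
      have hLn := hL n
      have hLn1 := hL (n+1)
      have hyn := hy (n+1) (by omega)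
      have hν : 0 < lamSeq lam b y n / b := div_pos hLn hb
      have hlamsucc : lamSeq lam b y (n+1) = lamSeq lam b y n / b + y (n+1) := rfl
      -- π part
      have hIπ : ∀ x ∈ Ioi (0:ℝ), (∫ s in Ioi (0:ℝ), pKer α β b s x * π n s)
          = gammaDen (lamSeq lam b y n / b) α x := by
        intro x hx
        have e : ∀ s ∈ Ioi (0:ℝ), pKer α β b s x * π n s
            = pKer α β b s x * gammaDen (lamSeq lam b y n) (α+β) s * (fun _ => (1:ℝ)) s := by
          intro s hs'; rw [ihπ s hs']; simp
        rw [setIntegral_congr_fun measurableSet_Ioi e,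
          transition_integral hα hβ hb hLn (mem_Ioi.mp hx)]
        have : (∫ t in Ioi (0:ℝ), gammaDen (lamSeq lam b y n) β t
            * (fun _ => (1:ℝ)) (x / b + t)) = 1 := by
          simpa using integral_gammaDen hLn hβ
        rw [this, mul_one]
      have hπval : ∀ x ∈ Ioi (0:ℝ), π (n+1) x
          = (y (n+1) ^ (β-1) * (lamSeq lam b y n / b) ^ α * Real.Gamma (α+β) /
              (Real.Gamma α * Real.Gamma β * (lamSeq lam b y n / b + y (n+1)) ^ (α+β)) / c (n+1))
            * gammaDen (lamSeq lam b y (n+1)) (α+β) x := by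
        intro x hx
        rw [hrec n x hx, hIπ x hx, gObs_mul_gammaDen hα hβ hν hyn (mem_Ioi.mp hx), hlamsucc]
        ring
      have hKc : (y (n+1) ^ (β-1) * (lamSeq lam b y n / b) ^ α * Real.Gamma (α+β) /
              (Real.Gamma α * Real.Gamma β * (lamSeq lam b y n / b + y (n+1)) ^ (α+β))
              / c (n+1)) = 1 := by
        have h1 := hnorm n
        rw [setIntegral_congr_fun measurableSet_Ioi hπval, integral_const_mul,
          integral_gammaDen hLn1 hq, mul_one] at h1
        exact h1
      have hπ1 : ∀ x ∈ Ioi (0:ℝ), π (n+1) x = gammaDen (lamSeq lam b y (n+1)) (α+β) x := by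
        intro x hx; rw [hπval x hx, hKc, one_mul]
      refine ⟨hπ1, ?_⟩
      -- πt part
      have hZnpos := hZpos n
      have hIπt : ∀ x ∈ Ioi (0:ℝ), (∫ s in Ioi (0:ℝ), pKer α β b s x * πt n s)
          = gammaDen (lamSeq lam b y n / b) α x * (hs (n+1) x
            * (∫ u in Ioi (0:ℝ), gammaDen (lamSeq lam b y n) (α+β) u * hs n u)⁻¹) := by
        intro x hx
        have e : ∀ s ∈ Ioi (0:ℝ), pKer α β b s x * πt n s
            = pKer α β b s x * gammaDen (lamSeq lam b y n) (α+β) s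
              * (fun u => hs n u
                * (∫ v in Ioi (0:ℝ), gammaDen (lamSeq lam b y n) (α+β) v * hs n v)⁻¹) s := by
          intro s hs'
          rw [ihπt s hs']
          simp only []
          rw [div_eq_mul_inv]
          ring
        rw [setIntegral_congr_fun measurableSet_Ioi e,
          transition_integral hα hβ hb hLn (mem_Ioi.mp hx)]
        congr 1
        rw [show (fun t => gammaDen (lamSeq lam b y n) β t * (hs n (x / b + t)
              * (∫ v in Ioi (0:ℝ), gammaDen (lamSeq lam b y n) (α+β) v * hs n v)⁻¹))
            = fun t => (gammaDen (lamSeq lam b y n) β t * hs n (x / b + t))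
              * (∫ v in Ioi (0:ℝ), gammaDen (lamSeq lam b y n) (α+β) v * hs n v)⁻¹
          from funext (fun t => by ring)]
        rw [integral_mul_const, hssucc]
      have hπtval : ∀ x ∈ Ioi (0:ℝ), πt (n+1) x
          = (y (n+1) ^ (β-1) * (lamSeq lam b y n / b) ^ α * Real.Gamma (α+β) /
              (Real.Gamma α * Real.Gamma β * (lamSeq lam b y n / b + y (n+1)) ^ (α+β))
             * (∫ u in Ioi (0:ℝ), gammaDen (lamSeq lam b y n) (α+β) u * hs n u)⁻¹ / ct (n+1))
            * (gammaDen (lamSeq lam b y (n+1)) (α+β) x * hs (n+1) x) := by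
        intro x hx
        rw [hrect n x hx, hIπt x hx,
          show gObs β x (y (n+1)) * (gammaDen (lamSeq lam b y n / b) α x * (hs (n+1) x
              * (∫ u in Ioi (0:ℝ), gammaDen (lamSeq lam b y n) (α+β) u * hs n u)⁻¹))
            = (gObs β x (y (n+1)) * gammaDen (lamSeq lam b y n / b) α x) * (hs (n+1) x
              * (∫ u in Ioi (0:ℝ), gammaDen (lamSeq lam b y n) (α+β) u * hs n u)⁻¹)
          from by ring,
          gObs_mul_gammaDen hα hβ hν hyn (mem_Ioi.mp hx), hlamsucc]
        ring
      have hZ1 : (y (n+1) ^ (β-1) * (lamSeq lam b y n / b) ^ α * Real.Gamma (α+β) /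
              (Real.Gamma α * Real.Gamma β * (lamSeq lam b y n / b + y (n+1)) ^ (α+β))
             * (∫ u in Ioi (0:ℝ), gammaDen (lamSeq lam b y n) (α+β) u * hs n u)⁻¹ / ct (n+1))
          * (∫ u in Ioi (0:ℝ), gammaDen (lamSeq lam b y (n+1)) (α+β) u * hs (n+1) u) = 1 := by
        have h1 := hnormt n
        rw [setIntegral_congr_fun measurableSet_Ioi hπtval, integral_const_mul] at h1
        exact h1
      have hDval : (y (n+1) ^ (β-1) * (lamSeq lam b y n / b) ^ α * Real.Gamma (α+β) /
              (Real.Gamma α * Real.Gamma β * (lamSeq lam b y n / b + y (n+1)) ^ (α+β))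
             * (∫ u in Ioi (0:ℝ), gammaDen (lamSeq lam b y n) (α+β) u * hs n u)⁻¹ / ct (n+1))
          = (∫ u in Ioi (0:ℝ), gammaDen (lamSeq lam b y (n+1)) (α+β) u * hs (n+1) u)⁻¹ := by
        exact eq_inv_of_mul_eq_one_left hZ1
      intro x hx
      rw [hπtval x hx, hDval, div_eq_mul_inv]
      ring
  -- closed form of lamSeq
  have hclosed : ∀ n : ℕ, lamSeq lam b y n = (lam + ∑ j ∈ Finset.Icc 1 n, y j * b ^ j) / b ^ n := by
    intro n; induction n with
    | zero => simp [lamSeq]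
    | succ n ih =>
      rw [show lamSeq lam b y (n+1) = lamSeq lam b y n / b + y (n+1) from rfl, ih,
        Finset.sum_Icc_succ_top (by omega : 1 ≤ n + 1)]
      have hbne := (hbn n).ne'
      field_simp
      ring
  intro n _
  have hden : b ^ n * (lam / b ^ n + ∑ j ∈ Finset.Icc 1 n, y j * b ^ j / b ^ n)
      = b ^ n * lamSeq lam b y n := by
    rw [hclosed n,
      show (∑ j ∈ Finset.Icc 1 n, y j * b ^ j / b ^ n)
        = (∑ j ∈ Finset.Icc 1 n, y j * b ^ j) / b ^ n from (Finset.sum_div _ _ _).symm]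
    field_simp
  set L := lamSeq lam b y n with hLdef
  have hLpos : 0 < L := hL n
  have hgint := integrableOn_gammaDen hLpos hq
  have hg1 := integral_gammaDen hLpos hq
  have hM1 := integral_id_mul_gammaDen hLpos hq
  have hM2 := integral_sq_mul_gammaDen hLpos hq
  have hgpos : ∀ u ∈ Ioi (0:ℝ), 0 < gammaDen L (α+β) u :=
    fun u hu => gammaDen_pos hLpos hq (mem_Ioi.mp hu)
  set F : ℝ → ℝ := fun x => ∫ s in Ioi (0:ℝ), gammaDen L (α+β) s * |s - x| with hFdef
  have hFint : ∀ x : ℝ, 0 < x →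
      IntegrableOn (fun s => gammaDen L (α+β) s * |s - x|) (Ioi 0) := by
    intro x hx
    refine integrableOn_gammaDen_mul hLpos hq
      ((continuous_abs.comp (continuous_id.sub continuous_const)).aestronglyMeasurable)
      (C := x) (D := 1) (fun s hs' => ?_)
    have hsp := mem_Ioi.mp hs'
    rw [abs_abs]
    calc |s - x| ≤ |s| + |x| := abs_sub _ _
      _ = x + 1 * s := by rw [abs_of_pos hsp, abs_of_pos hx]; ring
  have hFnn : ∀ x : ℝ, 0 ≤ F x := fun x =>
    setIntegral_nonneg measurableSet_Ioi (fun s hs' => mul_nonneg (hgpos s hs').le (abs_nonneg _))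
  have hFub : ∀ x ∈ Ioi (0:ℝ), F x ≤ (α+β)/L + x := by
    intro x hx
    have hmono : F x ≤ ∫ s in Ioi (0:ℝ),
        (s * gammaDen L (α+β) s + gammaDen L (α+β) s * x) := by
      refine setIntegral_mono_on (hFint x (mem_Ioi.mp hx))
        ((integrableOn_id_mul_gammaDen hLpos hq).add (hgint.mul_const x))
        measurableSet_Ioi (fun s hs' => ?_)
      have hsp := mem_Ioi.mp hs'
      have habs : |s - x| ≤ s + x := by
        calc |s - x| ≤ |s| + |x| := abs_sub _ _
          _ = s + x := by rw [abs_of_pos hsp, abs_of_pos (mem_Ioi.mp hx)]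
      calc gammaDen L (α+β) s * |s - x| ≤ gammaDen L (α+β) s * (s + x) :=
            mul_le_mul_of_nonneg_left habs (hgpos s hs').le
        _ = s * gammaDen L (α+β) s + gammaDen L (α+β) s * x := by ring
    rwa [integral_add (integrableOn_id_mul_gammaDen hLpos hq) (hgint.mul_const x),
      integral_mul_const, hM1, hg1, one_mul] at hmono
  have hFlip : ∀ x ∈ Ioi (0:ℝ), ∀ x' ∈ Ioi (0:ℝ), |F x - F x'| ≤ 1 * |x - x'| := by
    intro x hx x' hx'
    rw [hFdef]
    simp only []
    rw [← integral_sub (hFint x (mem_Ioi.mp hx)) (hFint x' (mem_Ioi.mp hx'))]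
    have step1 : abs (∫ s in Ioi (0:ℝ), (gammaDen L (α+β) s * |s - x|
        - gammaDen L (α+β) s * |s - x'|))
        ≤ ∫ s in Ioi (0:ℝ), abs (gammaDen L (α+β) s * |s - x|
        - gammaDen L (α+β) s * |s - x'|) := by
      simpa [Real.norm_eq_abs] using norm_integral_le_integral_norm
        (μ := volume.restrict (Ioi 0))
        (fun s => gammaDen L (α+β) s * |s - x| - gammaDen L (α+β) s * |s - x'|)
    refine step1.trans ?_
    have step2 : ∫ s in Ioi (0:ℝ), abs (gammaDen L (α+β) s * |s - x|
        - gammaDen L (α+β) s * |s - x'|)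
        ≤ ∫ s in Ioi (0:ℝ), gammaDen L (α+β) s * |x - x'| := by
      refine setIntegral_mono_on
        ((hFint x (mem_Ioi.mp hx)).sub (hFint x' (mem_Ioi.mp hx'))).abs
        (hgint.mul_const _) measurableSet_Ioi (fun s hs' => ?_)
      have hgt := (hgpos s hs').le
      rw [← mul_sub, abs_mul, abs_of_nonneg hgt]
      refine mul_le_mul_of_nonneg_left ?_ hgt
      calc abs (|s - x| - |s - x'|) ≤ |s - x - (s - x')| := abs_abs_sub_abs_le_abs_sub _ _
        _ = |x - x'| := by rw [show s - x - (s - x') = -(x - x') from by ring, abs_neg]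
    refine step2.trans ?_
    rw [integral_mul_const, hg1]
  have hFcont : ContinuousOn F (Ioi 0) := continuousOn_of_lip zero_le_one hFlip
  have hgF_int : IntegrableOn (fun x => gammaDen L (α+β) x * F x) (Ioi 0) := by
    refine integrableOn_gammaDen_mul hLpos hq
      (hFcont.aestronglyMeasurable measurableSet_Ioi) (C := (α+β)/L) (D := 1)
      (fun x hx => ?_)
    rw [abs_of_nonneg (hFnn x)]
    calc F x ≤ (α+β)/L + x := hFub x hx
      _ = (α+β)/L + 1 * x := by ring
  have hGexp : ∀ x : ℝ, ∀ s : ℝ, gammaDen L (α+β) s * (s - x)^2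
      = s^2 * gammaDen L (α+β) s - (2*x) * (s * gammaDen L (α+β) s)
        + x^2 * gammaDen L (α+β) s := by intro x s; ring
  have hGint : ∀ x : ℝ, IntegrableOn (fun s => gammaDen L (α+β) s * (s - x)^2) (Ioi 0) := by
    intro x
    have : (fun s => gammaDen L (α+β) s * (s - x)^2)
        = fun s => s^2 * gammaDen L (α+β) s - (2*x) * (s * gammaDen L (α+β) s)
          + x^2 * gammaDen L (α+β) s := funext (hGexp x)
    rw [this]
    exact ((integrableOn_sq_mul_gammaDen hLpos hq).sub
      ((integrableOn_id_mul_gammaDen hLpos hq).const_mul _)).add (hgint.const_mul _)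
  have hGval : ∀ x : ℝ, (∫ s in Ioi (0:ℝ), gammaDen L (α+β) s * (s - x)^2)
      = (α+β)*((α+β)+1)/L^2 - 2*x*((α+β)/L) + x^2 := by
    intro x
    simp only [hGexp x]
    have hA : Integrable (fun s => s^2 * gammaDen L (α+β) s
        - (2*x) * (s * gammaDen L (α+β) s)) (volume.restrict (Ioi 0)) :=
      (integrableOn_sq_mul_gammaDen hLpos hq).sub
        ((integrableOn_id_mul_gammaDen hLpos hq).const_mul _)
    have hB : Integrable (fun s => x^2 * gammaDen L (α+β) s) (volume.restrict (Ioi 0)) :=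
      hgint.const_mul _
    have hC : Integrable (fun s => (2*x) * (s * gammaDen L (α+β) s)) (volume.restrict (Ioi 0)) :=
      (integrableOn_id_mul_gammaDen hLpos hq).const_mul _
    rw [integral_add hA hB, integral_sub (integrableOn_sq_mul_gammaDen hLpos hq) hC,
      integral_const_mul, integral_const_mul, hM1, hM2, hg1]
    ring
  have hFsq : ∀ x ∈ Ioi (0:ℝ),
      F x ^ 2 ≤ (α+β)*((α+β)+1)/L^2 - 2*x*((α+β)/L) + x^2 := by
    intro x hx
    have h2' : IntegrableOn (fun s => gammaDen L (α+β) s * |s - x| ^ 2) (Ioi 0) :=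
      (hGint x).congr_fun (fun s _ => by rw [sq_abs]) measurableSet_Ioi
    have hcs := sq_setIntegral_le (fun u hu => (hgpos u hu).le) hg1 hgint
      (hFint x (mem_Ioi.mp hx)) h2'
    calc F x ^ 2 ≤ ∫ s in Ioi (0:ℝ), gammaDen L (α+β) s * |s - x| ^ 2 := hcs
      _ = ∫ s in Ioi (0:ℝ), gammaDen L (α+β) s * (s - x)^2 :=
          setIntegral_congr_fun measurableSet_Ioi (fun s _ => by rw [sq_abs])
      _ = (α+β)*((α+β)+1)/L^2 - 2*x*((α+β)/L) + x^2 := hGval x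
  have hdom_int : IntegrableOn
      (fun x => gammaDen L (α+β) x * ((α+β)*((α+β)+1)/L^2 - 2*x*((α+β)/L) + x^2)) (Ioi 0) := by
    have : (fun x => gammaDen L (α+β) x * ((α+β)*((α+β)+1)/L^2 - 2*x*((α+β)/L) + x^2))
        = fun x => ((α+β)*((α+β)+1)/L^2) * gammaDen L (α+β) x
          - (2*((α+β)/L)) * (x * gammaDen L (α+β) x) + x^2 * gammaDen L (α+β) x :=
      funext (fun x => by ring)
    rw [this]
    exact ((hgint.const_mul _).sub
      ((integrableOn_id_mul_gammaDen hLpos hq).const_mul _)).add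
      (integrableOn_sq_mul_gammaDen hLpos hq)
  have hgF2_int : IntegrableOn (fun x => gammaDen L (α+β) x * F x ^ 2) (Ioi 0) := by
    have hmeas : AEStronglyMeasurable (fun x => gammaDen L (α+β) x * F x ^ 2)
        (volume.restrict (Ioi 0)) :=
      (continuousOn_gammaDen.mul (hFcont.pow 2)).aestronglyMeasurable measurableSet_Ioi
    refine hdom_int.mono' hmeas ?_
    refine (ae_restrict_iff' measurableSet_Ioi).2 (ae_of_all _ (fun x hx => ?_))
    have hgx := (hgpos x hx).le
    rw [Real.norm_eq_abs, abs_of_nonneg (mul_nonneg hgx (sq_nonneg _))]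
    exact mul_le_mul_of_nonneg_left (hFsq x hx) hgx
  have hval2 : ∫ x in Ioi (0:ℝ),
      gammaDen L (α+β) x * ((α+β)*((α+β)+1)/L^2 - 2*x*((α+β)/L) + x^2)
      = 2*(α+β)/L^2 := by
    have e : ∀ x : ℝ, gammaDen L (α+β) x * ((α+β)*((α+β)+1)/L^2 - 2*x*((α+β)/L) + x^2)
        = ((α+β)*((α+β)+1)/L^2) * gammaDen L (α+β) x
          - (2*((α+β)/L)) * (x * gammaDen L (α+β) x) + x^2 * gammaDen L (α+β) x :=
      fun x => by ring
    simp only [e]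
    have hA : Integrable (fun x => ((α+β)*((α+β)+1)/L^2) * gammaDen L (α+β) x
        - (2*((α+β)/L)) * (x * gammaDen L (α+β) x)) (volume.restrict (Ioi 0)) :=
      (hgint.const_mul _).sub ((integrableOn_id_mul_gammaDen hLpos hq).const_mul _)
    have hB : Integrable (fun x => x^2 * gammaDen L (α+β) x) (volume.restrict (Ioi 0)) :=
      integrableOn_sq_mul_gammaDen hLpos hq
    have hC : Integrable (fun x => (2*((α+β)/L)) * (x * gammaDen L (α+β) x))
        (volume.restrict (Ioi 0)) :=
      (integrableOn_id_mul_gammaDen hLpos hq).const_mul _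
    rw [integral_add hA hB, integral_sub (hgint.const_mul _) hC,
      integral_const_mul, integral_const_mul, hM1, hM2, hg1]
    field_simp
    ring
  have houter : (∫ x in Ioi (0:ℝ), gammaDen L (α+β) x * F x) ^ 2 ≤ 2*(α+β)/L^2 := by
    have hcs2 := sq_setIntegral_le (fun u hu => (hgpos u hu).le) hg1 hgint hgF_int hgF2_int
    have hmono2 : ∫ x in Ioi (0:ℝ), gammaDen L (α+β) x * F x ^ 2
        ≤ ∫ x in Ioi (0:ℝ),
          gammaDen L (α+β) x * ((α+β)*((α+β)+1)/L^2 - 2*x*((α+β)/L) + x^2) := by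
      refine setIntegral_mono_on hgF2_int hdom_int measurableSet_Ioi (fun x hx => ?_)
      exact mul_le_mul_of_nonneg_left (hFsq x hx) (hgpos x hx).le
    calc (∫ x in Ioi (0:ℝ), gammaDen L (α+β) x * F x) ^ 2
        ≤ ∫ x in Ioi (0:ℝ), gammaDen L (α+β) x * F x ^ 2 := hcs2
      _ ≤ _ := hmono2
      _ = 2*(α+β)/L^2 := hval2
  have hgFnn : 0 ≤ ∫ x in Ioi (0:ℝ), gammaDen L (α+β) x * F x :=
    setIntegral_nonneg measurableSet_Ioi
      (fun x hx => mul_nonneg (hgpos x hx).le (hFnn x))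
  have hgFle : ∫ x in Ioi (0:ℝ), gammaDen L (α+β) x * F x ≤ Real.sqrt (2*(α+β)) / L := by
    rw [le_div_iff₀ hLpos]
    have hs2 : Real.sqrt (2*(α+β)) ^ 2 = 2*(α+β) := Real.sq_sqrt (by linarith)
    have houter' : (∫ x in Ioi (0:ℝ), gammaDen L (α+β) x * F x) ^ 2 * L ^ 2 ≤ 2*(α+β) := by
      have h' := mul_le_mul_of_nonneg_right houter (sq_nonneg L)
      rwa [div_mul_cancel₀ _ (by positivity : L ^ 2 ≠ (0:ℝ))] at h'
    nlinarith [Real.sqrt_nonneg (2*(α+β)), houter', hs2, hgFnn, hLpos,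
      mul_nonneg hgFnn hLpos.le,
      sq_nonneg ((∫ x in Ioi (0:ℝ), gammaDen L (α+β) x * F x) * L - Real.sqrt (2*(α+β)))]
  -- pointwise bound on the likelihood-ratio deviation
  have hghn_int := hZint n L (α+β) hLpos hq
  have hC1 : ∀ x ∈ Ioi (0:ℝ),
      |(∫ u in Ioi (0:ℝ), gammaDen L (α+β) u * hs n u) - hs n x| ≤ K / b ^ n * F x := by
    intro x hx
    have hxp := mem_Ioi.mp hx
    have hsub : ∫ s in Ioi (0:ℝ), (gammaDen L (α+β) s * hs n s - gammaDen L (α+β) s * hs n x)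
        = (∫ u in Ioi (0:ℝ), gammaDen L (α+β) u * hs n u) - hs n x := by
      rw [integral_sub hghn_int (hgint.mul_const _), integral_mul_const, hg1, one_mul]
    rw [← hsub]
    have step1 : |∫ s in Ioi (0:ℝ),
        (gammaDen L (α+β) s * hs n s - gammaDen L (α+β) s * hs n x)|
        ≤ ∫ s in Ioi (0:ℝ), |gammaDen L (α+β) s * hs n s - gammaDen L (α+β) s * hs n x| := by
      simpa [Real.norm_eq_abs] using norm_integral_le_integral_norm
        (μ := volume.restrict (Ioi 0))
        (fun s => gammaDen L (α+β) s * hs n s - gammaDen L (α+β) s * hs n x)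
    refine step1.trans ?_
    have hRint : IntegrableOn (fun s => gammaDen L (α+β) s * (K / b ^ n * |s - x|)) (Ioi 0) := by
      have h' : IntegrableOn (fun s => K / b ^ n * (gammaDen L (α+β) s * |s - x|)) (Ioi 0) :=
        (hFint x hxp).const_mul (K / b ^ n)
      exact h'.congr_fun (fun s _ => by ring) measurableSet_Ioi
    have step2 : ∫ s in Ioi (0:ℝ), |gammaDen L (α+β) s * hs n s - gammaDen L (α+β) s * hs n x|
        ≤ ∫ s in Ioi (0:ℝ), gammaDen L (α+β) s * (K / b ^ n * |s - x|) := by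
      refine setIntegral_mono_on (hghn_int.sub (hgint.mul_const _)).abs hRint
        measurableSet_Ioi (fun s hs' => ?_)
      have hgt := (hgpos s hs').le
      rw [← mul_sub, abs_mul, abs_of_nonneg hgt]
      exact mul_le_mul_of_nonneg_left ((hprops n).2 s hs' x hx) hgt
    refine step2.trans (le_of_eq ?_)
    have e : ∀ s : ℝ, gammaDen L (α+β) s * (K / b ^ n * |s - x|)
        = K / b ^ n * (gammaDen L (α+β) s * |s - x|) := fun s => by ring
    simp only [e]
    rw [integral_const_mul]
  -- assembling the total variation bound
  have hZnpos := hZpos n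
  have hZnlow := hZlow n
  have hTVpt : ∀ x ∈ Ioi (0:ℝ), |π n x - πt n x|
      = (∫ u in Ioi (0:ℝ), gammaDen L (α+β) u * hs n u)⁻¹
        * (gammaDen L (α+β) x * |(∫ u in Ioi (0:ℝ), gammaDen L (α+β) u * hs n u) - hs n x|) := by
    intro x hx
    rw [(inv n).1 x hx, (inv n).2 x hx]
    have hZne := hZnpos.ne'
    have e : gammaDen L (α+β) x - gammaDen L (α+β) x * hs n x /
          (∫ u in Ioi (0:ℝ), gammaDen L (α+β) u * hs n u)
        = gammaDen L (α+β) x * ((∫ u in Ioi (0:ℝ), gammaDen L (α+β) u * hs n u) - hs n x) /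
          (∫ u in Ioi (0:ℝ), gammaDen L (α+β) u * hs n u) := by
      have hZne' : (∫ u in Ioi (0:ℝ), gammaDen L (α+β) u * hs n u) ≠ 0 := hZne
      field_simp
    rw [e, abs_div, abs_mul, abs_of_nonneg (hgpos x hx).le, abs_of_pos hZnpos,
      div_eq_mul_inv]
    ring
  have habs_int : IntegrableOn (fun x => gammaDen L (α+β) x *
      |(∫ u in Ioi (0:ℝ), gammaDen L (α+β) u * hs n u) - hs n x|) (Ioi 0) := by
    refine integrableOn_gammaDen_mul hLpos hq
      (((continuousOn_const.sub (hscont n)).abs).aestronglyMeasurable measurableSet_Ioi)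
      (C := |∫ u in Ioi (0:ℝ), gammaDen L (α+β) u * hs n u| + (hs n 1 + K / b ^ n))
      (D := K / b ^ n) (fun x hx => ?_)
    rw [abs_abs]
    calc |(∫ u in Ioi (0:ℝ), gammaDen L (α+β) u * hs n u) - hs n x|
        ≤ |∫ u in Ioi (0:ℝ), gammaDen L (α+β) u * hs n u| + |hs n x| := abs_sub _ _
      _ ≤ |∫ u in Ioi (0:ℝ), gammaDen L (α+β) u * hs n u|
          + ((hs n 1 + K / b ^ n) + K / b ^ n * x) := by linarith [hbd n x hx]
      _ = |∫ u in Ioi (0:ℝ), gammaDen L (α+β) u * hs n u| + (hs n 1 + K / b ^ n)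
          + K / b ^ n * x := by ring
  have hchain : ∫ x in Ioi (0:ℝ), |π n x - πt n x|
      ≤ (∫ u in Ioi (0:ℝ), gammaDen L (α+β) u * hs n u)⁻¹
        * (K / b ^ n * (Real.sqrt (2*(α+β)) / L)) := by
    rw [setIntegral_congr_fun measurableSet_Ioi hTVpt, integral_const_mul]
    refine mul_le_mul_of_nonneg_left ?_ (inv_nonneg.2 hZnpos.le)
    have hst : ∫ x in Ioi (0:ℝ), gammaDen L (α+β) x *
        |(∫ u in Ioi (0:ℝ), gammaDen L (α+β) u * hs n u) - hs n x|
        ≤ ∫ x in Ioi (0:ℝ), K / b ^ n * (gammaDen L (α+β) x * F x) := by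
      refine setIntegral_mono_on habs_int (hgF_int.const_mul _) measurableSet_Ioi
        (fun x hx => ?_)
      calc gammaDen L (α+β) x *
            |(∫ u in Ioi (0:ℝ), gammaDen L (α+β) u * hs n u) - hs n x|
          ≤ gammaDen L (α+β) x * (K / b ^ n * F x) :=
            mul_le_mul_of_nonneg_left (hC1 x hx) (hgpos x hx).le
        _ = K / b ^ n * (gammaDen L (α+β) x * F x) := by ring
    refine hst.trans ?_
    rw [integral_const_mul]
    exact mul_le_mul_of_nonneg_left hgFle (div_nonneg hK0 (hbn n).le)
  have hTVnn : 0 ≤ ∫ x in Ioi (0:ℝ), |π n x - πt n x| :=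
    setIntegral_nonneg measurableSet_Ioi (fun x _ => abs_nonneg _)
  have hinv_le : (∫ u in Ioi (0:ℝ), gammaDen L (α+β) u * hs n u)⁻¹ ≤ H⁻¹ :=
    inv_anti₀ hH hZnlow
  have hrhs_nn : 0 ≤ K / b ^ n * (Real.sqrt (2*(α+β)) / L) :=
    mul_nonneg (div_nonneg hK0 (hbn n).le) (div_nonneg (Real.sqrt_nonneg _) hLpos.le)
  have hfinal : ∫ x in Ioi (0:ℝ), |π n x - πt n x|
      ≤ H⁻¹ * (K / b ^ n * (Real.sqrt (2*(α+β)) / L)) := by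
    refine hchain.trans ?_
    exact mul_le_mul_of_nonneg_right hinv_le hrhs_nn
  show (1/2 : ℝ) * ∫ x in Ioi (0:ℝ), |π n x - πt n x| ≤ _
  rw [hden, const_rearrange hH.ne' (hbn n).ne' hLpos.ne']
  linarith [hfinal]
end

section
/- Assume E(X_0^β) < ∞. Then for every δ ≥ 0 and every j ≥ 1, P(b^j Y_j ≤ δ^j) ≤ (δ^{jβ}/Γ(β+1)) · E(W_1^β)^j · E(X_0^β). -/
open MeasureTheory Set

/-- The Beta distribution `Beta(a, c)` on `(0, 1)`. -/
noncomputable def betaMeas (a c : ℝ) : Measure ℝ :=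
  (volume : Measure ℝ).withDensity fun x =>
    ENNReal.ofReal
      (if 0 < x ∧ x < 1 then
        Real.Gamma (a + c) / (Real.Gamma a * Real.Gamma c) * x ^ (a - 1) * (1 - x) ^ (c - 1)
      else 0)

/-- The Gamma distribution `Γ(lam, r)` on `(0, ∞)` with rate `lam` and shape `r`. -/
noncomputable def gammaMeas (lam r : ℝ) : Measure ℝ :=
  (volume : Measure ℝ).withDensity fun x =>
    ENNReal.ofReal
      (if 0 < x then lam ^ r * x ^ (r - 1) * Real.exp (-(lam * x)) / Real.Gamma r else 0)

lemma betaMeas_compl_Ioo (a c : ℝ) : betaMeas a c (Set.Ioo (0:ℝ) 1)ᶜ = 0 := by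
  rw [betaMeas, withDensity_apply _ measurableSet_Ioo.compl]
  rw [setLIntegral_congr_fun measurableSet_Ioo.compl
    (fun x hx => ?_), lintegral_zero]
  have : ¬ (0 < x ∧ x < 1) := by simpa [Set.mem_Ioo] using hx
  simp [this]

lemma gammaMeas_Iic_le {β : ℝ} (hβ : 0 < β) (t : ℝ) :
    gammaMeas 1 β (Set.Iic t) ≤ ENNReal.ofReal (t ^ β) / ENNReal.ofReal (Real.Gamma (β + 1)) := by
  have hΓ : 0 < Real.Gamma β := Real.Gamma_pos_of_pos hβ
  have hΓ1 : 0 < Real.Gamma (β + 1) := Real.Gamma_pos_of_pos (by linarith)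
  rw [gammaMeas, withDensity_apply _ measurableSet_Iic]
  rcases le_or_gt t 0 with ht | ht
  · rw [setLIntegral_congr_fun measurableSet_Iic
      (fun x hx => ?_), lintegral_zero]
    · exact zero_le
    · have : ¬ (0 < x) := by simp only [Set.mem_Iic] at hx; linarith
      simp [this]
  · have hsplit : Set.Iic t = Set.Iic (0:ℝ) ∪ Set.Ioc 0 t := (Set.Iic_union_Ioc_eq_Iic ht.le).symm
    rw [hsplit, lintegral_union measurableSet_Ioc (Set.Iic_disjoint_Ioc le_rfl)]
    have h0 : (∫⁻ x in Set.Iic (0:ℝ), ENNReal.ofReal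
        (if 0 < x then (1:ℝ) ^ β * x ^ (β - 1) * Real.exp (-(1 * x)) / Real.Gamma β else 0)) = 0 := by
      rw [setLIntegral_congr_fun measurableSet_Iic
        (fun x hx => ?_), lintegral_zero]
      have : ¬ (0 < x) := by simp only [Set.mem_Iic] at hx; linarith
      simp [this]
    rw [h0, zero_add]
    have hb : (∫⁻ x in Set.Ioc (0:ℝ) t, ENNReal.ofReal
        (if 0 < x then (1:ℝ) ^ β * x ^ (β - 1) * Real.exp (-(1 * x)) / Real.Gamma β else 0))
        ≤ ∫⁻ x in Set.Ioc (0:ℝ) t, ENNReal.ofReal (x ^ (β - 1) / Real.Gamma β) := by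
      refine setLIntegral_mono_ae (by fun_prop) (Filter.Eventually.of_forall (fun x hx => ?_))
      have hx0 : 0 < x := hx.1
      rw [if_pos hx0, Real.one_rpow, one_mul]
      apply ENNReal.ofReal_le_ofReal
      have hexp : Real.exp (-(1 * x)) ≤ 1 := by
        rw [Real.exp_le_one_iff]; linarith
      have hxp : (0:ℝ) ≤ x ^ (β - 1) := Real.rpow_nonneg hx0.le _
      calc x ^ (β - 1) * Real.exp (-(1 * x)) / Real.Gamma β
          ≤ x ^ (β - 1) * 1 / Real.Gamma β := by
            gcongr
        _ = x ^ (β - 1) / Real.Gamma β := by ring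
    refine hb.trans ?_
    have hInt : IntegrableOn (fun x : ℝ => x ^ (β - 1) / Real.Gamma β) (Set.Ioc 0 t) := by
      have := (intervalIntegral.intervalIntegrable_rpow' (a := 0) (b := t) (r := β - 1)
        (by linarith)).1
      exact this.div_const _
    rw [← ofReal_integral_eq_lintegral_ofReal hInt
      ((ae_restrict_iff' measurableSet_Ioc).2 (Filter.Eventually.of_forall
        (fun x hx => div_nonneg (Real.rpow_nonneg hx.1.le _) hΓ.le)))]
    have hI : (∫ x in Set.Ioc (0:ℝ) t, x ^ (β - 1) / Real.Gamma β)
        = (∫ x in (0:ℝ)..t, x ^ (β - 1)) / Real.Gamma β := by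
      rw [intervalIntegral.integral_of_le ht.le, integral_div]
    have hval : (∫ x in Set.Ioc (0:ℝ) t, x ^ (β - 1) / Real.Gamma β)
        = t ^ β / Real.Gamma (β + 1) := by
      rw [hI, integral_rpow (Or.inl (by linarith)), show β - 1 + 1 = β by ring,
        Real.zero_rpow hβ.ne', Real.Gamma_add_one hβ.ne']
      field_simp
      ring
    rw [hval, ENNReal.ofReal_div_of_pos hΓ1]

/-- Expectation of a finite product of independent `ℝ≥0∞`-valued random variables. -/
lemma lintegral_finset_prod_of_iIndepFun {ι : Type*} {Ω : Type*} [MeasurableSpace Ω]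
    {μ : Measure Ω} [IsProbabilityMeasure μ] {g : ι → Ω → ENNReal}
    (h : ProbabilityTheory.iIndepFun g μ)
    (hm : ∀ i, Measurable (g i)) (s : Finset ι) :
    ∫⁻ ω, ∏ i ∈ s, g i ω ∂μ = ∏ i ∈ s, ∫⁻ ω, g i ω ∂μ := by
  classical
  induction s using Finset.induction_on with
  | empty => simp
  | @insert a s ha ih =>
    have hps : Measurable fun ω => ∏ i ∈ s, g i ω :=
      Finset.measurable_prod s fun i _ => hm i
    have hi : ProbabilityTheory.IndepFun (g a) (∏ i ∈ s, g i) μ :=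
      (h.indepFun_finset_prod_of_notMem hm ha).symm
    have hi' : ProbabilityTheory.IndepFun (g a) (fun ω => ∏ i ∈ s, g i ω) μ := by
      have : (∏ i ∈ s, g i) = fun ω => ∏ i ∈ s, g i ω := by
        funext ω; simp [Finset.prod_apply]
      rwa [this] at hi
    simp only [Finset.prod_insert ha]
    rw [ProbabilityTheory.lintegral_mul_eq_lintegral_mul_lintegral_of_indepFun''
      (hm a).aemeasurable hps.aemeasurable hi', ih]

/-- In the hidden Markov model `X_n = b X_{n-1} W_n`, `Y_n = G_n / X_n`
(here `W n`, `G n` stand for `W_{n+1}`, `G_{n+1}`), if `E(X₀^β) < ∞` then for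
every `δ ≥ 0` and `j ≥ 1`, `P(b^j Y_j ≤ δ^j) ≤ (δ^{jβ}/Γ(β+1)) E(W₁^β)^j E(X₀^β)`. -/
theorem obs_small_probability_bound
    {Ω : Type*} [MeasurableSpace Ω] (P : Measure Ω) [IsProbabilityMeasure P]
    (α β b : ℝ) (hα : 0 < α) (hβ : 0 < β) (hb : 0 < b)
    (W G : ℕ → Ω → ℝ) (X0 : Ω → ℝ) (X Y : ℕ → Ω → ℝ)
    (hWm : ∀ n, Measurable (W n)) (hGm : ∀ n, Measurable (G n)) (hX0m : Measurable X0)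
    (hW : ∀ n, Measure.map (W n) P = betaMeas α β)
    (hG : ∀ n, Measure.map (G n) P = gammaMeas 1 β)
    (hindep : ProbabilityTheory.iIndepFun
      (Sum.elim W (Sum.elim G fun _ : Unit => X0)) P)
    (hX0pos : ∀ ω, 0 < X0 ω)
    (hX0 : X 0 = X0) (hXrec : ∀ n ω, X (n + 1) ω = b * X n ω * W n ω)
    (hY : ∀ n ω, Y (n + 1) ω = G n ω / X (n + 1) ω)
    (hX0int : Integrable (fun ω => X0 ω ^ β) P)
    (δ : ℝ) (hδ : 0 ≤ δ) (j : ℕ) (hj : 1 ≤ j) :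
    (P {ω | b ^ j * Y j ω ≤ δ ^ j}).toReal ≤
      (δ ^ j) ^ β / Real.Gamma (β + 1) * (∫ ω, W 0 ω ^ β ∂P) ^ j * ∫ ω, X0 ω ^ β ∂P := by
  classical
  have hΓ1 : 0 < Real.Gamma (β + 1) := Real.Gamma_pos_of_pos (by linarith)
  obtain ⟨k, rfl⟩ : ∃ k, j = k + 1 := ⟨j - 1, (Nat.succ_pred_eq_of_pos hj).symm⟩
  set F := Sum.elim W (Sum.elim G fun _ : Unit => X0) with hFdef
  have hFm : ∀ i, Measurable (F i) := by
    rintro (n | n | u)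
    exacts [hWm n, hGm n, hX0m]
  -- a.e. each W n lies in (0,1)
  have hWae : ∀ n, ∀ᵐ ω ∂P, W n ω ∈ Set.Ioo (0:ℝ) 1 := by
    intro n
    rw [ae_iff]
    have : {ω | ¬ W n ω ∈ Set.Ioo (0:ℝ) 1} = (W n) ⁻¹' (Set.Ioo (0:ℝ) 1)ᶜ := rfl
    rw [this, ← Measure.map_apply (hWm n) measurableSet_Ioo.compl, hW n, betaMeas_compl_Ioo]
  -- definition of the comparison function
  set f : Ω → ℝ := fun ω => δ ^ (k+1) * X0 ω * ∏ i ∈ Finset.range (k+1), |W i ω| with hfdef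
  have hfm : Measurable f :=
    ((hX0m.const_mul _).mul (Finset.measurable_prod _ fun i _ => (hWm i).abs))
  have hf0 : ∀ ω, 0 ≤ f ω := fun ω =>
    mul_nonneg (mul_nonneg (pow_nonneg hδ _) (hX0pos ω).le)
      (Finset.prod_nonneg fun i _ => abs_nonneg _)
  -- closed form for X
  have hXform : ∀ n ω, X n ω = b ^ n * X0 ω * ∏ i ∈ Finset.range n, W i ω := by
    intro n ω
    induction n with
    | zero => simp [hX0]
    | succ n ih => rw [hXrec n ω, ih, Finset.prod_range_succ]; ring
  -- event inclusion
  have hsub : {ω | b ^ (k+1) * Y (k+1) ω ≤ δ ^ (k+1)} ⊆ {ω | G k ω ≤ f ω} ∪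
      (⋃ i ∈ Finset.range (k+1), {ω | W i ω ∉ Set.Ioo (0:ℝ) 1}) := by
    intro ω hω
    by_cases hN : ∀ i ∈ Finset.range (k+1), W i ω ∈ Set.Ioo (0:ℝ) 1
    · left
      have hWpos : ∀ i ∈ Finset.range (k+1), 0 < W i ω := fun i hi => (hN i hi).1
      have hPr : 0 < ∏ i ∈ Finset.range (k+1), W i ω := Finset.prod_pos hWpos
      have hXj : 0 < X (k+1) ω := by
        rw [hXform]
        exact mul_pos (mul_pos (pow_pos hb _) (hX0pos ω)) hPr
      have h1 : b ^ (k+1) * Y (k+1) ω ≤ δ ^ (k+1) := hω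
      rw [hY k ω, ← mul_div_assoc] at h1
      have key := (div_le_iff₀ hXj).mp h1
      rw [hXform] at key
      have hfω : f ω = δ^(k+1) * X0 ω * ∏ i ∈ Finset.range (k+1), W i ω := by
        simp only [hfdef]
        congr 1
        exact Finset.prod_congr rfl fun i hi => abs_of_pos (hWpos i hi)
      have key' : b ^ (k+1) * G k ω ≤
          b ^ (k+1) * (δ ^ (k+1) * X0 ω * ∏ i ∈ Finset.range (k+1), W i ω) := by
        have heq : δ ^ (k+1) * (b ^ (k+1) * X0 ω * ∏ i ∈ Finset.range (k+1), W i ω)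
            = b ^ (k+1) * (δ ^ (k+1) * X0 ω * ∏ i ∈ Finset.range (k+1), W i ω) := by ring
        linarith [key, heq.ge]
      have := le_of_mul_le_mul_left key' (pow_pos hb (k+1))
      show G k ω ≤ f ω
      rw [hfω]
      exact this
    · right
      push_neg at hN
      obtain ⟨i, hi, hni⟩ := hN
      simp only [Set.mem_iUnion]
      exact ⟨i, hi, hni⟩
  have hNnull : P (⋃ i ∈ Finset.range (k+1), {ω | W i ω ∉ Set.Ioo (0:ℝ) 1}) = 0 := by
    refine (measure_biUnion_null_iff (Finset.range (k+1)).countable_toSet).2 fun i _ => ?_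
    have := hWae i
    rw [ae_iff] at this
    exact this
  have step1 : P {ω | b ^ (k+1) * Y (k+1) ω ≤ δ ^ (k+1)} ≤ P {ω | G k ω ≤ f ω} := by
    refine (measure_mono hsub).trans ?_
    refine (measure_union_le _ _).trans ?_
    rw [hNnull, add_zero]
  -- independence of f and G k
  set S : Finset (ℕ ⊕ (ℕ ⊕ Unit)) :=
    insert (Sum.inr (Sum.inr ())) ((Finset.range (k+1)).image Sum.inl) with hSdef
  set T : Finset (ℕ ⊕ (ℕ ⊕ Unit)) := {Sum.inr (Sum.inl k)} with hTdef
  have hST : Disjoint S T := by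
    simp [hSdef, hTdef, Finset.disjoint_singleton_right]
  have hind1 := hindep.indepFun_finset S T hST hFm
  have hmemX : (Sum.inr (Sum.inr ()) : ℕ ⊕ (ℕ ⊕ Unit)) ∈ S := Finset.mem_insert_self _ _
  have hmemW : ∀ i : {x // x ∈ Finset.range (k+1)}, (Sum.inl i.1 : ℕ ⊕ (ℕ ⊕ Unit)) ∈ S :=
    fun i => Finset.mem_insert_of_mem (Finset.mem_image_of_mem _ i.2)
  have hmemG : (Sum.inr (Sum.inl k) : ℕ ⊕ (ℕ ⊕ Unit)) ∈ T := Finset.mem_singleton_self _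
  set φ : ({x // x ∈ S} → ℝ) → ℝ := fun v => δ ^ (k+1) * v ⟨Sum.inr (Sum.inr ()), hmemX⟩ *
      ∏ i ∈ (Finset.range (k+1)).attach, |v ⟨Sum.inl i.1, hmemW i⟩| with hφdef
  set ψ : ({x // x ∈ T} → ℝ) → ℝ := fun v => v ⟨Sum.inr (Sum.inl k), hmemG⟩ with hψdef
  have hφ : Measurable φ := by
    apply Measurable.mul
    · exact (measurable_pi_apply _).const_mul _
    · exact Finset.measurable_prod _ fun i _ => (measurable_pi_apply _).abs
  have hψ : Measurable ψ := measurable_pi_apply _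
  have hindfG : ProbabilityTheory.IndepFun f (G k) P := by
    have hcomp := hind1.comp hφ hψ
    have heqf : (φ ∘ fun a (i : {x // x ∈ S}) => F i.1 a) = f := by
      funext ω
      show δ ^ (k+1) * X0 ω * ∏ i ∈ (Finset.range (k+1)).attach, |W i.1 ω| = f ω
      rw [hfdef]
      simp only
      rw [Finset.prod_attach (Finset.range (k+1)) (fun i => |W i ω|)]
    have heqg : (ψ ∘ fun a (i : {x // x ∈ T}) => F i.1 a) = G k := rfl
    rwa [heqf, heqg] at hcomp
  -- probability of the event via the product measure
  have hGprob : IsProbabilityMeasure (gammaMeas 1 β) :=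
    hG 0 ▸ Measure.isProbabilityMeasure_map (hGm 0).aemeasurable
  have hmapf : IsProbabilityMeasure (P.map f) := Measure.isProbabilityMeasure_map hfm.aemeasurable
  have step2 : P {ω | G k ω ≤ f ω} = ∫⁻ y, gammaMeas 1 β (Set.Iic y) ∂(P.map f) := by
    have hpair : Measurable fun ω => (f ω, G k ω) := hfm.prodMk (hGm k)
    have hmS : MeasurableSet {p : ℝ × ℝ | p.2 ≤ p.1} :=
      measurableSet_le measurable_snd measurable_fst
    have hev : {ω | G k ω ≤ f ω} = (fun ω => (f ω, G k ω)) ⁻¹' {p | p.2 ≤ p.1} := rfl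
    rw [hev, ← Measure.map_apply hpair hmS,
      (ProbabilityTheory.indepFun_iff_map_prod_eq_prod_map_map hfm.aemeasurable
        (hGm k).aemeasurable).mp hindfG, hG k, Measure.prod_apply hmS]
    rfl
  have step3 : (∫⁻ y, gammaMeas 1 β (Set.Iic y) ∂(P.map f))
      ≤ (∫⁻ y, ENNReal.ofReal (y ^ β) ∂(P.map f)) / ENNReal.ofReal (Real.Gamma (β+1)) := by
    calc (∫⁻ y, gammaMeas 1 β (Set.Iic y) ∂(P.map f))
        ≤ ∫⁻ y, ENNReal.ofReal (y ^ β) / ENNReal.ofReal (Real.Gamma (β+1)) ∂(P.map f) :=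
          lintegral_mono fun y => gammaMeas_Iic_le hβ y
      _ = (∫⁻ y, ENNReal.ofReal (y ^ β) ∂(P.map f)) / ENNReal.ofReal (Real.Gamma (β+1)) := by
          simp_rw [div_eq_mul_inv]
          exact lintegral_mul_const' _ _ (by simpa using hΓ1)
  have step4 : (∫⁻ y, ENNReal.ofReal (y ^ β) ∂(P.map f))
      = ∫⁻ ω, ENNReal.ofReal (f ω ^ β) ∂P :=
    lintegral_map (by fun_prop) hfm
  -- the ENNReal-valued independent family
  set g : (ℕ ⊕ (ℕ ⊕ Unit)) → Ω → ENNReal := fun i ω => ENNReal.ofReal (|F i ω| ^ β) with hgdef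
  have hgm : ∀ i, Measurable (g i) := fun i => by
    have := hFm i
    fun_prop
  have hgindep : ProbabilityTheory.iIndepFun g P :=
    hindep.comp (fun _ x => ENNReal.ofReal (|x| ^ β)) (fun _ => by fun_prop)
  -- splitting the integrand
  have hsplit : ∀ ω, ENNReal.ofReal (f ω ^ β)
      = ENNReal.ofReal ((δ ^ (k+1)) ^ β) * ∏ i ∈ S, g i ω := by
    intro ω
    have h1 : f ω ^ β = (δ ^ (k+1)) ^ β * ((X0 ω) ^ β *
        ∏ i ∈ Finset.range (k+1), |W i ω| ^ β) := by
      rw [hfdef]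
      simp only
      rw [Real.mul_rpow (mul_nonneg (pow_nonneg hδ _) (hX0pos ω).le)
          (Finset.prod_nonneg fun i _ => abs_nonneg _),
        Real.mul_rpow (pow_nonneg hδ _) (hX0pos ω).le,
        ← Real.finset_prod_rpow _ _ (fun i _ => abs_nonneg _)]
      ring
    have h2 : ∏ i ∈ S, g i ω = ENNReal.ofReal ((X0 ω) ^ β) *
        ∏ i ∈ Finset.range (k+1), ENNReal.ofReal (|W i ω| ^ β) := by
      rw [hSdef, Finset.prod_insert (by simp),
        Finset.prod_image (fun a _ b _ h => Sum.inl.inj h)]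
      congr 1
      show ENNReal.ofReal (|X0 ω| ^ β) = _
      rw [abs_of_pos (hX0pos ω)]
    rw [h1, h2, ENNReal.ofReal_mul (Real.rpow_nonneg (pow_nonneg hδ _) _),
      ENNReal.ofReal_mul (Real.rpow_nonneg (hX0pos ω).le _),
      ENNReal.ofReal_prod_of_nonneg (fun i _ => Real.rpow_nonneg (abs_nonneg _) _)]
  -- expectations of the factors
  have hEWn : ∀ n, (∫⁻ ω, ENNReal.ofReal (|W n ω| ^ β) ∂P)
      = ∫⁻ y, ENNReal.ofReal (|y| ^ β) ∂(betaMeas α β) := by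
    intro n
    rw [← hW n, lintegral_map (by fun_prop) (hWm n)]
  have hWint : Integrable (fun ω => W 0 ω ^ β) P := by
    refine (integrable_const (1:ℝ)).mono' (Measurable.aestronglyMeasurable (by fun_prop)) ?_
    filter_upwards [hWae 0] with ω hω
    rw [Real.norm_eq_abs, abs_of_nonneg (Real.rpow_nonneg hω.1.le _)]
    exact Real.rpow_le_one hω.1.le hω.2.le hβ.le
  have hEW0 : (∫⁻ ω, ENNReal.ofReal (|W 0 ω| ^ β) ∂P)
      = ENNReal.ofReal (∫ ω, W 0 ω ^ β ∂P) := by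
    rw [← ofReal_integral_eq_lintegral_ofReal]
    · congr 1
      refine integral_congr_ae ?_
      filter_upwards [hWae 0] with ω hω
      rw [abs_of_pos hω.1]
    · refine hWint.congr ?_
      filter_upwards [hWae 0] with ω hω
      rw [abs_of_pos hω.1]
    · exact Filter.Eventually.of_forall fun ω => Real.rpow_nonneg (abs_nonneg _) _
  have hEW : ∀ n, (∫⁻ ω, ENNReal.ofReal (|W n ω| ^ β) ∂P)
      = ENNReal.ofReal (∫ ω, W 0 ω ^ β ∂P) := fun n => by rw [hEWn n, ← hEWn 0, hEW0]
  have hEX : (∫⁻ ω, ENNReal.ofReal ((X0 ω) ^ β) ∂P) = ENNReal.ofReal (∫ ω, X0 ω ^ β ∂P) :=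
    (ofReal_integral_eq_lintegral_ofReal hX0int
      (Filter.Eventually.of_forall fun ω => Real.rpow_nonneg (hX0pos ω).le _)).symm
  -- putting the expectation together
  have hprodint : (∫⁻ ω, ENNReal.ofReal (f ω ^ β) ∂P)
      = ENNReal.ofReal ((δ ^ (k+1)) ^ β) * (ENNReal.ofReal (∫ ω, X0 ω ^ β ∂P) *
        ENNReal.ofReal (∫ ω, W 0 ω ^ β ∂P) ^ (k+1)) := by
    simp_rw [hsplit]
    rw [lintegral_const_mul _ (Finset.measurable_prod _ fun i _ => hgm i)]
    congr 1
    rw [lintegral_finset_prod_of_iIndepFun hgindep hgm S, hSdef,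
      Finset.prod_insert (by simp), Finset.prod_image (fun a _ b _ h => Sum.inl.inj h)]
    have hX0fact : (∫⁻ ω, g (Sum.inr (Sum.inr ())) ω ∂P) = ENNReal.ofReal (∫ ω, X0 ω ^ β ∂P) := by
      rw [← hEX]
      refine lintegral_congr fun ω => ?_
      show ENNReal.ofReal (|X0 ω| ^ β) = _
      rw [abs_of_pos (hX0pos ω)]
    rw [hX0fact]
    congr 1
    have hfac : ∀ i ∈ Finset.range (k+1), (∫⁻ ω, g (Sum.inl i) ω ∂P)
        = ENNReal.ofReal (∫ ω, W 0 ω ^ β ∂P) := fun i _ => hEW i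
    rw [Finset.prod_congr rfl hfac, Finset.prod_const, Finset.card_range]
  -- nonnegativity facts
  have hEWnn : 0 ≤ ∫ ω, W 0 ω ^ β ∂P := by
    refine integral_nonneg_of_ae ?_
    filter_upwards [hWae 0] with ω hω
    exact Real.rpow_nonneg hω.1.le _
  have hEXnn : 0 ≤ ∫ ω, X0 ω ^ β ∂P :=
    integral_nonneg fun ω => Real.rpow_nonneg (hX0pos ω).le _
  -- final chain
  have hfinal : P {ω | b ^ (k+1) * Y (k+1) ω ≤ δ ^ (k+1)} ≤
      ENNReal.ofReal ((δ ^ (k+1)) ^ β / Real.Gamma (β + 1) *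
        (∫ ω, W 0 ω ^ β ∂P) ^ (k+1) * ∫ ω, X0 ω ^ β ∂P) := by
    refine step1.trans ?_
    rw [step2]
    refine step3.trans ?_
    rw [step4, hprodint]
    rw [← ENNReal.ofReal_pow hEWnn, ← ENNReal.ofReal_mul hEXnn,
      ← ENNReal.ofReal_mul (Real.rpow_nonneg (pow_nonneg hδ _) _),
      ← ENNReal.ofReal_div_of_pos hΓ1]
    apply le_of_eq
    congr 1
    ring
  refine ENNReal.toReal_le_of_le_ofReal ?_ hfinal
  have : 0 ≤ (δ ^ (k+1)) ^ β / Real.Gamma (β + 1) := by positivity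
  positivity
end

section
/- Let 0 < p < β and assume E(X_0^p) < ∞. Then for every n ≥ 1, E((b^n Y_n)^{−p}) = (Γ(β − p)/Γ(β)) · E(X_0^p) · E(W_1^p)^n. -/
open MeasureTheory Set

lemma betaMeas_compl_eq_zero (a c : ℝ) : betaMeas a c ((Set.Ioo (0:ℝ) 1)ᶜ) = 0 := by
  rw [betaMeas, withDensity_apply _ measurableSet_Ioo.compl]
  refine (setLIntegral_congr_fun measurableSet_Ioo.compl
    (fun x hx => ?_)).trans lintegral_zero
  rw [if_neg (by simpa [Set.mem_Ioo] using hx), ENNReal.ofReal_zero]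

lemma gammaMeas_compl_eq_zero (lam r : ℝ) : gammaMeas lam r ((Set.Ioi (0:ℝ))ᶜ) = 0 := by
  rw [gammaMeas, withDensity_apply _ measurableSet_Ioi.compl]
  refine (setLIntegral_congr_fun measurableSet_Ioi.compl
    (fun x hx => ?_)).trans lintegral_zero
  rw [if_neg (by simpa using hx), ENNReal.ofReal_zero]

/-- Expectation of a product of independent nonnegative (ℝ≥0∞-valued) random variables. -/
lemma aux_lintegral_prod {Ω : Type*} [MeasurableSpace Ω] {P : Measure Ω}
    [IsProbabilityMeasure P] {ι : Type*} {f : ι → Ω → ENNReal}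
    (hmeas : ∀ i, Measurable (f i))
    (hindep : ProbabilityTheory.iIndepFun f P) (s : Finset ι) :
    ∫⁻ ω, ∏ i ∈ s, f i ω ∂P = ∏ i ∈ s, ∫⁻ ω, f i ω ∂P := by
  classical
  induction s using Finset.induction_on with
  | empty => simp
  | @insert a s ha ih =>
    have hdep : ProbabilityTheory.IndepFun (f a) (∏ j ∈ s, f j) P :=
      (hindep.indepFun_finsetProd_of_notMem hmeas ha).symm
    have hprodmeas : Measurable (∏ j ∈ s, f j) := by
      have h1 : (∏ j ∈ s, f j) = fun ω => ∏ j ∈ s, f j ω :=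
        funext fun ω => Finset.prod_apply ω s f
      rw [h1]
      exact Finset.measurable_prod s fun i _ => hmeas i
    calc ∫⁻ ω, ∏ i ∈ insert a s, f i ω ∂P
        = ∫⁻ ω, (f a * ∏ j ∈ s, f j) ω ∂P := by
          refine lintegral_congr fun ω => ?_
          simp [Finset.prod_insert ha, Finset.prod_apply]
      _ = (∫⁻ ω, f a ω ∂P) * ∫⁻ ω, (∏ j ∈ s, f j) ω ∂P :=
          ProbabilityTheory.lintegral_mul_eq_lintegral_mul_lintegral_of_indepFun
            (hmeas a) hprodmeas hdep
      _ = ∏ i ∈ insert a s, ∫⁻ ω, f i ω ∂P := by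
          rw [Finset.prod_insert ha, ← ih]
          congr 1
          refine lintegral_congr fun ω => ?_
          simp [Finset.prod_apply]

/-- Auxiliary family of transformed random variables. -/
noncomputable def auxg (p : ℝ) : (ℕ ⊕ (ℕ ⊕ Unit)) → ℝ → ENNReal :=
  Sum.elim (fun _ : ℕ => fun x : ℝ => ENNReal.ofReal (x ^ p))
    (Sum.elim (fun _ : ℕ => fun x : ℝ => ENNReal.ofReal (x ^ (-p)))
      (fun _ : Unit => fun x : ℝ => ENNReal.ofReal (x ^ p)))

noncomputable def auxF {Ω : Type*} (p : ℝ) (W G : ℕ → Ω → ℝ) (X0 : Ω → ℝ) :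
    (ℕ ⊕ (ℕ ⊕ Unit)) → Ω → ENNReal :=
  fun i => auxg p i ∘ (Sum.elim W (Sum.elim G fun _ : Unit => X0) i)

lemma auxF_inl {Ω : Type*} (p : ℝ) (W G : ℕ → Ω → ℝ) (X0 : Ω → ℝ) (k : ℕ) :
    auxF p W G X0 (Sum.inl k) = fun ω => ENNReal.ofReal (W k ω ^ p) := rfl

lemma auxF_inr_inl {Ω : Type*} (p : ℝ) (W G : ℕ → Ω → ℝ) (X0 : Ω → ℝ) (k : ℕ) :
    auxF p W G X0 (Sum.inr (Sum.inl k)) = fun ω => ENNReal.ofReal (G k ω ^ (-p)) := rfl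

lemma auxF_inr_inr {Ω : Type*} (p : ℝ) (W G : ℕ → Ω → ℝ) (X0 : Ω → ℝ) (u : Unit) :
    auxF p W G X0 (Sum.inr (Sum.inr u)) = fun ω => ENNReal.ofReal (X0 ω ^ p) := rfl

lemma auxg_measurable (p : ℝ) : ∀ i, Measurable (auxg p i) := by
  rintro (k | k | u) <;> · unfold auxg; simp only [Sum.elim_inl, Sum.elim_inr]; fun_prop

/-- Moment identity: for `0 < p < β` and `E(X₀^p) < ∞`,
`E((bⁿ Y_n)^{-p}) = (Γ(β-p)/Γ(β)) E(X₀^p) E(W₁^p)ⁿ`. -/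
theorem neg_moment_identity
    {Ω : Type*} [MeasurableSpace Ω] (P : Measure Ω) [IsProbabilityMeasure P]
    (α β b p : ℝ) (hα : 0 < α) (hβ : 0 < β) (hb : 0 < b) (hp : 0 < p) (hpβ : p < β)
    (W G : ℕ → Ω → ℝ) (X0 : Ω → ℝ) (X Y : ℕ → Ω → ℝ)
    (hWm : ∀ n, Measurable (W n)) (hGm : ∀ n, Measurable (G n)) (hX0m : Measurable X0)
    (hW : ∀ n, Measure.map (W n) P = betaMeas α β)
    (hG : ∀ n, Measure.map (G n) P = gammaMeas 1 β)
    (hindep : ProbabilityTheory.iIndepFun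
      (Sum.elim W (Sum.elim G fun _ : Unit => X0)) P)
    (hX0pos : ∀ ω, 0 < X0 ω)
    (hX0 : X 0 = X0) (hXrec : ∀ n ω, X (n + 1) ω = b * X n ω * W n ω)
    (hY : ∀ n ω, Y (n + 1) ω = G n ω / X (n + 1) ω)
    (hX0int : Integrable (fun ω => X0 ω ^ p) P)
    (n : ℕ) (hn : 1 ≤ n) :
    (∫ ω, (b ^ n * Y n ω) ^ (-p) ∂P) =
      Real.Gamma (β - p) / Real.Gamma β * (∫ ω, X0 ω ^ p ∂P) * (∫ ω, W 0 ω ^ p ∂P) ^ n := by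
  classical
  obtain ⟨m, rfl⟩ : ∃ m, n = m + 1 := ⟨n - 1, (Nat.succ_pred_eq_of_pos hn).symm⟩
  have hβp : 0 < β - p := by linarith
  have hΓβ : 0 < Real.Gamma β := Real.Gamma_pos_of_pos hβ
  -- a.e. facts on W and G
  have hWae : ∀ k, ∀ᵐ ω ∂P, W k ω ∈ Set.Ioo (0:ℝ) 1 := by
    intro k
    refine ae_iff.2 ?_
    have h1 : {ω | ¬ W k ω ∈ Set.Ioo (0:ℝ) 1} = W k ⁻¹' ((Set.Ioo (0:ℝ) 1)ᶜ) := rfl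
    rw [h1, ← Measure.map_apply (hWm k) measurableSet_Ioo.compl, hW k, betaMeas_compl_eq_zero]
  have hGae : ∀ k, ∀ᵐ ω ∂P, 0 < G k ω := by
    intro k
    refine ae_iff.2 ?_
    have h1 : {ω | ¬ 0 < G k ω} = G k ⁻¹' ((Set.Ioi (0:ℝ))ᶜ) := rfl
    rw [h1, ← Measure.map_apply (hGm k) measurableSet_Ioi.compl, hG k, gammaMeas_compl_eq_zero]
  -- measurability of X and Y
  have hXmeas : ∀ N, Measurable (X N) := by
    intro N
    induction N with
    | zero => rw [hX0]; exact hX0m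
    | succ N ih =>
      have h1 : X (N + 1) = fun ω => b * X N ω * W N ω := funext fun ω => hXrec N ω
      rw [h1]; exact (measurable_const.mul ih).mul (hWm N)
  have hYmeas : Measurable (Y (m + 1)) := by
    have h1 : Y (m + 1) = fun ω => G m ω / X (m + 1) ω := funext fun ω => hY m ω
    rw [h1]; exact (hGm m).div (hXmeas (m + 1))
  -- explicit formula for X
  have hXf : ∀ N ω, X N ω = b ^ N * X0 ω * ∏ k ∈ Finset.range N, W k ω := by
    intro N
    induction N with
    | zero => intro ω; simp [hX0]
    | succ N ih =>
      intro ω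
      rw [hXrec N ω, ih ω, Finset.prod_range_succ]
      ring
  -- the pointwise identity on the good event
  have hptwise : ∀ ω, (∀ k, W k ω ∈ Set.Ioo (0:ℝ) 1) → 0 < G m ω →
      ((b ^ (m + 1) * Y (m + 1) ω) ^ (-p)
        = G m ω ^ (-p) * (X0 ω ^ p * ∏ k ∈ Finset.range (m + 1), W k ω ^ p)) ∧
      0 < b ^ (m + 1) * Y (m + 1) ω := by
    intro ω h1 h2
    have hprod : 0 < ∏ k ∈ Finset.range (m + 1), W k ω :=
      Finset.prod_pos fun k _ => (h1 k).1
    have hc : 0 < X0 ω * ∏ k ∈ Finset.range (m + 1), W k ω := mul_pos (hX0pos ω) hprod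
    have hbpos : (0:ℝ) < b ^ (m + 1) := pow_pos hb _
    have hbY : b ^ (m + 1) * Y (m + 1) ω
        = G m ω / (X0 ω * ∏ k ∈ Finset.range (m + 1), W k ω) := by
      have hassoc : b ^ (m + 1) * X0 ω * ∏ k ∈ Finset.range (m + 1), W k ω
          = b ^ (m + 1) * (X0 ω * ∏ k ∈ Finset.range (m + 1), W k ω) := by ring
      rw [hY m ω, hXf (m + 1) ω, hassoc, ← mul_div_assoc,
        mul_div_mul_left _ _ hbpos.ne']
    constructor
    · rw [hbY, Real.div_rpow h2.le hc.le, Real.rpow_neg hc.le, div_inv_eq_mul,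
        Real.mul_rpow (hX0pos ω).le hprod.le,
        ← Real.finset_prod_rpow _ _ (fun k _ => (h1 k).1.le) p]
    · rw [hbY]; exact div_pos h2 hc
  -- the independent transformed family
  have hFmeas : ∀ i, Measurable (auxF p W G X0 i) := by
    rintro (k | k | u)
    · exact (auxg_measurable p (Sum.inl k)).comp (hWm k)
    · exact (auxg_measurable p (Sum.inr (Sum.inl k))).comp (hGm k)
    · exact (auxg_measurable p (Sum.inr (Sum.inr u))).comp hX0m
  have hFindep : ProbabilityTheory.iIndepFun (auxF p W G X0) P :=
    hindep.comp (auxg p) (auxg_measurable p)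
  -- the index set
  set s : Finset (ℕ ⊕ (ℕ ⊕ Unit)) :=
    insert (Sum.inr (Sum.inl m)) (insert (Sum.inr (Sum.inr ()))
      ((Finset.range (m + 1)).image Sum.inl)) with hs_def
  have hmem1 : (Sum.inr (Sum.inl m) : ℕ ⊕ (ℕ ⊕ Unit)) ∉
      insert (Sum.inr (Sum.inr ())) ((Finset.range (m + 1)).image Sum.inl) := by simp
  have hmem2 : (Sum.inr (Sum.inr ()) : ℕ ⊕ (ℕ ⊕ Unit)) ∉
      (Finset.range (m + 1)).image Sum.inl := by simp
  have hs_split : ∀ f : (ℕ ⊕ (ℕ ⊕ Unit)) → ENNReal,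
      ∏ i ∈ s, f i = f (Sum.inr (Sum.inl m)) *
        (f (Sum.inr (Sum.inr ())) * ∏ k ∈ Finset.range (m + 1), f (Sum.inl k)) := by
    intro f
    rw [hs_def, Finset.prod_insert hmem1, Finset.prod_insert hmem2,
      Finset.prod_image fun a _ c _ h => Sum.inl_injective h]
  -- the key a.e. identity
  have hGood : ∀ᵐ ω ∂P, (∀ k, W k ω ∈ Set.Ioo (0:ℝ) 1) ∧ 0 < G m ω :=
    (ae_all_iff.2 hWae).and (hGae m)
  have hkey : ∀ᵐ ω ∂P, ENNReal.ofReal ((b ^ (m + 1) * Y (m + 1) ω) ^ (-p))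
      = ∏ i ∈ s, auxF p W G X0 i ω := by
    filter_upwards [hGood] with ω hω
    obtain ⟨h1, h2⟩ := hω
    rw [hs_split (fun i => auxF p W G X0 i ω)]
    simp only [auxF_inl, auxF_inr_inl, auxF_inr_inr]
    rw [(hptwise ω h1 h2).1,
      ENNReal.ofReal_mul (Real.rpow_nonneg h2.le _),
      ENNReal.ofReal_mul (Real.rpow_nonneg (hX0pos ω).le _),
      ENNReal.ofReal_prod_of_nonneg fun k _ => Real.rpow_nonneg (h1 k).1.le _]
  -- nonnegativity and measurability of the integrand
  have hnnae : 0 ≤ᵐ[P] fun ω => (b ^ (m + 1) * Y (m + 1) ω) ^ (-p) := by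
    filter_upwards [hGood] with ω hω
    exact Real.rpow_nonneg (hptwise ω hω.1 hω.2).2.le _
  have hsm : Measurable fun ω => (b ^ (m + 1) * Y (m + 1) ω) ^ (-p) := by fun_prop
  -- computing the three lintegrals
  have hW0nn : 0 ≤ᵐ[P] fun ω => W 0 ω ^ p := by
    filter_upwards [hWae 0] with ω hω
    exact Real.rpow_nonneg hω.1.le _
  have hW0m : Measurable fun ω => W 0 ω ^ p := by fun_prop
  have hW0int : Integrable (fun ω => W 0 ω ^ p) P := by
    refine Integrable.mono' (integrable_const 1) hW0m.aestronglyMeasurable ?_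
    filter_upwards [hWae 0] with ω hω
    rw [Real.norm_eq_abs, abs_of_nonneg (Real.rpow_nonneg hω.1.le _)]
    exact Real.rpow_le_one hω.1.le hω.2.le hp.le
  have hLW : ∀ k, (∫⁻ ω, ENNReal.ofReal (W k ω ^ p) ∂P)
      = ENNReal.ofReal (∫ ω, W 0 ω ^ p ∂P) := by
    intro k
    have hmf : Measurable fun x : ℝ => ENNReal.ofReal (x ^ p) := by fun_prop
    calc (∫⁻ ω, ENNReal.ofReal (W k ω ^ p) ∂P)
        = ∫⁻ x, ENNReal.ofReal (x ^ p) ∂(Measure.map (W k) P) :=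
          (lintegral_map hmf (hWm k)).symm
      _ = ∫⁻ x, ENNReal.ofReal (x ^ p) ∂(Measure.map (W 0) P) := by rw [hW k, hW 0]
      _ = ∫⁻ ω, ENNReal.ofReal (W 0 ω ^ p) ∂P := lintegral_map hmf (hWm 0)
      _ = ENNReal.ofReal (∫ ω, W 0 ω ^ p ∂P) :=
          (ofReal_integral_eq_lintegral_ofReal hW0int hW0nn).symm
  have hLX : (∫⁻ ω, ENNReal.ofReal (X0 ω ^ p) ∂P) = ENNReal.ofReal (∫ ω, X0 ω ^ p ∂P) :=
    (ofReal_integral_eq_lintegral_ofReal hX0int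
      (Filter.Eventually.of_forall fun ω => Real.rpow_nonneg (hX0pos ω).le _)).symm
  have hGint : IntegrableOn (fun x => Real.exp (-x) * x ^ (β - p - 1) / Real.Gamma β)
      (Set.Ioi 0) volume := (Real.GammaIntegral_convergent hβp).div_const _
  have hGnn : 0 ≤ᵐ[volume.restrict (Set.Ioi (0:ℝ))]
      fun x => Real.exp (-x) * x ^ (β - p - 1) / Real.Gamma β := by
    filter_upwards [self_mem_ae_restrict (measurableSet_Ioi : MeasurableSet (Set.Ioi (0:ℝ)))]
      with x hx
    exact div_nonneg (mul_nonneg (Real.exp_nonneg _) (Real.rpow_nonneg (le_of_lt hx) _)) hΓβ.le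
  have hLG : (∫⁻ ω, ENNReal.ofReal (G m ω ^ (-p)) ∂P)
      = ENNReal.ofReal (Real.Gamma (β - p) / Real.Gamma β) := by
    have hmf : Measurable fun x : ℝ => ENNReal.ofReal (x ^ (-p)) := by fun_prop
    have hdm : Measurable fun x : ℝ => ENNReal.ofReal
        (if 0 < x then (1:ℝ) ^ β * x ^ (β - 1) * Real.exp (-(1 * x)) / Real.Gamma β else 0) := by
      refine Measurable.ennreal_ofReal ?_
      exact Measurable.ite measurableSet_Ioi (by fun_prop) measurable_const
    calc (∫⁻ ω, ENNReal.ofReal (G m ω ^ (-p)) ∂P)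
        = ∫⁻ x, ENNReal.ofReal (x ^ (-p)) ∂(gammaMeas 1 β) := by
          rw [← lintegral_map hmf (hGm m), hG m]
      _ = ∫⁻ x, ((fun x : ℝ => ENNReal.ofReal
            (if 0 < x then (1:ℝ) ^ β * x ^ (β - 1) * Real.exp (-(1 * x)) / Real.Gamma β else 0))
            * fun x : ℝ => ENNReal.ofReal (x ^ (-p))) x ∂volume := by
          rw [gammaMeas, lintegral_withDensity_eq_lintegral_mul _ hdm hmf]
      _ = ∫⁻ x, (Set.Ioi (0:ℝ)).indicator
            (fun x => ENNReal.ofReal (Real.exp (-x) * x ^ (β - p - 1) / Real.Gamma β)) x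
            ∂volume := by
          refine lintegral_congr fun x => ?_
          by_cases hx : 0 < x
          · rw [Set.indicator_of_mem (Set.mem_Ioi.mpr hx), Pi.mul_apply, if_pos hx,
              ← ENNReal.ofReal_mul (by positivity)]
            congr 1
            have hxx : x ^ (β - 1) * x ^ (-p) = x ^ (β - p - 1) := by
              rw [← Real.rpow_add hx]; ring_nf
            calc (1:ℝ) ^ β * x ^ (β - 1) * Real.exp (-(1 * x)) / Real.Gamma β * x ^ (-p)
                = Real.exp (-x) * (x ^ (β - 1) * x ^ (-p)) / Real.Gamma β := by
                  rw [Real.one_rpow, one_mul]; ring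
              _ = Real.exp (-x) * x ^ (β - p - 1) / Real.Gamma β := by rw [hxx]
          · rw [Set.indicator_of_notMem (by simpa using hx : x ∉ Set.Ioi (0:ℝ)), Pi.mul_apply, if_neg hx]
            simp
      _ = ∫⁻ x in Set.Ioi (0:ℝ),
            ENNReal.ofReal (Real.exp (-x) * x ^ (β - p - 1) / Real.Gamma β) ∂volume :=
          lintegral_indicator measurableSet_Ioi _
      _ = ENNReal.ofReal
            (∫ x in Set.Ioi (0:ℝ), Real.exp (-x) * x ^ (β - p - 1) / Real.Gamma β) :=
          (ofReal_integral_eq_lintegral_ofReal hGint hGnn).symm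
      _ = ENNReal.ofReal (Real.Gamma (β - p) / Real.Gamma β) := by
          rw [integral_div, ← Real.Gamma_eq_integral hβp]
  -- assembling everything
  have hγnn : 0 ≤ Real.Gamma (β - p) / Real.Gamma β :=
    div_nonneg (Real.Gamma_pos_of_pos hβp).le hΓβ.le
  have hiXnn : 0 ≤ ∫ ω, X0 ω ^ p ∂P :=
    integral_nonneg fun ω => Real.rpow_nonneg (hX0pos ω).le _
  have hiWnn : 0 ≤ ∫ ω, W 0 ω ^ p ∂P := integral_nonneg_of_ae hW0nn
  rw [integral_eq_lintegral_of_nonneg_ae hnnae hsm.aestronglyMeasurable,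
    lintegral_congr_ae hkey, aux_lintegral_prod hFmeas hFindep s,
    hs_split (fun i => ∫⁻ ω, auxF p W G X0 i ω ∂P)]
  simp only [auxF_inl, auxF_inr_inl, auxF_inr_inr]
  rw [hLG, hLX, Finset.prod_congr rfl (fun k _ => hLW k), Finset.prod_const,
    Finset.card_range]
  rw [ENNReal.toReal_mul, ENNReal.toReal_mul, ENNReal.toReal_pow,
    ENNReal.toReal_ofReal hγnn, ENNReal.toReal_ofReal hiXnn, ENNReal.toReal_ofReal hiWnn]
  ring
end

section
/- Let U be a probability measure supported in [u, ∞) for some u > 0, and let π(x) = c x^{q−1} ∫ λ^q e^{−λx} dU(λ) (c > 0 the normalizing constant) be the corresponding mixed Gamma probability density on (0,∞). Then ∫_0^∞ ∫_0^∞ |x_1 − x_2| π(x_1) π(x_2) dx_1 dx_2 ≤ √(2q(q+1)) / u. -/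
open MeasureTheory Set

lemma aux_rpow_exp_bound {q : ℝ} (hq : 0 ≤ q) {s : ℝ} (hs : 0 ≤ s) :
    s ^ q * Real.exp (-s) ≤ 1 + (Nat.ceil q).factorial := by
  have hfac : (1 : ℝ) ≤ ((Nat.ceil q).factorial : ℝ) := by
    exact_mod_cast Nat.one_le_iff_ne_zero.mpr (Nat.ceil q).factorial_ne_zero
  rcases le_or_gt s 1 with h | h
  · have h1 : s ^ q ≤ 1 := Real.rpow_le_one hs h hq
    have h2 : Real.exp (-s) ≤ 1 := Real.exp_le_one_iff.mpr (by linarith)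
    nlinarith [Real.rpow_nonneg hs q, Real.exp_pos (-s)]
  · set n := Nat.ceil q with hn
    have h1 : s ^ q ≤ s ^ (n : ℝ) :=
      Real.rpow_le_rpow_of_exponent_le h.le (Nat.le_ceil q)
    have h2 : s ^ (n : ℝ) = s ^ n := Real.rpow_natCast s n
    have h3 : s ^ n / n.factorial ≤ Real.exp s := Real.pow_div_factorial_le_exp s (by linarith) n
    have h4 : s ^ n * Real.exp (-s) ≤ n.factorial := by
      rw [Real.exp_neg]
      rw [div_le_iff₀ (by positivity)] at h3
      have hie : (0:ℝ) < Real.exp s := Real.exp_pos s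
      rw [mul_inv_le_iff₀ hie]
      linarith [h3]
    calc s ^ q * Real.exp (-s) ≤ s ^ (n:ℝ) * Real.exp (-s) := by
          gcongr
      _ = s ^ n * Real.exp (-s) := by rw [h2]
      _ ≤ n.factorial := h4
      _ ≤ 1 + n.factorial := by linarith

lemma aux_gamma_int {s t : ℝ} (hs : 0 < s) (ht : 0 < t) :
    ∫ x in Ioi (0:ℝ), x ^ (s - 1) * Real.exp (-(t * x)) = Real.Gamma s / t ^ s := by
  rw [Real.integral_rpow_mul_exp_neg_mul_Ioi hs ht, one_div,
    Real.inv_rpow ht.le, mul_comm, div_eq_mul_inv]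

lemma aux_gamma_integrable {s t : ℝ} (hs : 0 < s) (ht : 0 < t) :
    IntegrableOn (fun x : ℝ => x ^ (s - 1) * Real.exp (-(t * x))) (Ioi 0) := by
  have := integrableOn_rpow_mul_exp_neg_mul_rpow (s := s - 1) (p := 1) (b := t)
    (by linarith) zero_lt_one ht
  refine this.congr_fun (fun x hx => ?_) measurableSet_Ioi
  simp only [Real.rpow_one, neg_mul]

lemma aux_kernel_integrable {q u x : ℝ} (hq : 0 < q) (hu : 0 < u) (hx : 0 < x)
    {U : Measure ℝ} [IsProbabilityMeasure U] (hU : ∀ᵐ t ∂U, u ≤ t) :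
    Integrable (fun t : ℝ => t ^ q * Real.exp (-(t * x))) U := by
  refine Integrable.mono'
    (integrable_const ((1 + ((Nat.ceil q).factorial : ℝ)) / x ^ q))
    (by measurability : Measurable fun t : ℝ => t ^ q * Real.exp (-(t * x))).aestronglyMeasurable
    ?_
  filter_upwards [hU] with t ht
  have ht0 : (0:ℝ) ≤ t := le_trans hu.le ht
  have h1 : 0 ≤ t ^ q * Real.exp (-(t * x)) :=
    mul_nonneg (Real.rpow_nonneg ht0 q) (Real.exp_pos _).le
  rw [Real.norm_eq_abs, abs_of_nonneg h1]
  have h2 : (t * x) ^ q * Real.exp (-(t * x)) ≤ 1 + (Nat.ceil q).factorial :=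
    aux_rpow_exp_bound hq.le (by positivity)
  rw [Real.mul_rpow ht0 hx.le] at h2
  rw [le_div_iff₀ (Real.rpow_pos_of_pos hx q)]
  calc t ^ q * Real.exp (-(t * x)) * x ^ q = t ^ q * x ^ q * Real.exp (-(t * x)) := by ring
    _ ≤ 1 + (Nat.ceil q).factorial := h2

set_option maxHeartbeats 1000000 in
/-- For a mixed Gamma probability density `π(x) = c x^{q-1} ∫ λ^q e^{-λx} dU(λ)`
with mixing measure `U` supported in `[u, ∞)`, `u > 0`, one has
`∫∫ |x₁ - x₂| π(x₁) π(x₂) dx₁ dx₂ ≤ √(2q(q+1)) / u`. -/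
theorem mixed_gamma_mean_abs_diff_bound
    (q u : ℝ) (hq : 0 < q) (hu : 0 < u)
    (U : Measure ℝ) [IsProbabilityMeasure U] (hUsupp : U (Set.Iio u) = 0)
    (c : ℝ) (hc : 0 < c) (π : ℝ → ℝ)
    (hπ : ∀ x ∈ Set.Ioi (0 : ℝ),
      π x = c * x ^ (q - 1) * ∫ t, t ^ q * Real.exp (-(t * x)) ∂U)
    (hnorm : (∫ x in Set.Ioi (0 : ℝ), π x) = 1) :
    (∫ x1 in Set.Ioi (0 : ℝ), ∫ x2 in Set.Ioi (0 : ℝ), |x1 - x2| * π x1 * π x2) ≤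
      Real.sqrt (2 * q * (q + 1)) / u := by
  set g : ℝ → ℝ := fun x => ∫ t, t ^ q * Real.exp (-(t * x)) ∂U with hgdef
  have hUae : ∀ᵐ t ∂U, u ≤ t := by
    rw [ae_iff]
    convert hUsupp using 2
    ext t
    simp [not_le]
  have hGammaq : 0 < Real.Gamma q := Real.Gamma_pos_of_pos hq
  -- measurability
  have hGsm : StronglyMeasurable g := by
    have hm : Measurable (fun p : ℝ × ℝ => p.2 ^ q * Real.exp (-(p.2 * p.1))) := by
      have h2 : Measurable (fun p : ℝ × ℝ => p.2 ^ q) := by measurability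
      exact h2.mul ((measurable_snd.mul measurable_fst).neg.exp)
    exact hm.stronglyMeasurable.integral_prod_right'
  have hπae : (fun x => c * x ^ (q - 1) * g x) =ᵐ[volume.restrict (Ioi 0)] π :=
    (ae_restrict_iff' measurableSet_Ioi).2 (ae_of_all _ fun x hx => (hπ x hx).symm)
  have hπaesm : AEStronglyMeasurable π (volume.restrict (Ioi 0)) := by
    refine AEStronglyMeasurable.congr ?_ hπae
    exact ((by measurability : Measurable fun x : ℝ => c * x ^ (q - 1)).mul
      hGsm.measurable).aestronglyMeasurable
  -- nonnegativity
  have hgnn : ∀ x : ℝ, 0 < x → 0 ≤ g x := fun x hx =>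
    integral_nonneg_of_ae (hUae.mono fun t ht =>
      mul_nonneg (Real.rpow_nonneg (hu.le.trans ht) q) (Real.exp_pos _).le)
  have hπnn : ∀ x ∈ Ioi (0:ℝ), 0 ≤ π x := fun x hx => by
    rw [hπ x hx]
    exact mul_nonneg (mul_nonneg hc.le (Real.rpow_nonneg (le_of_lt hx) _)) (hgnn x hx)
  have hπnn_ae : 0 ≤ᵐ[volume.restrict (Ioi 0)] π :=
    (ae_restrict_iff' measurableSet_Ioi).2 (ae_of_all _ hπnn)
  -- integrability of π
  have hπint : IntegrableOn π (Ioi 0) := by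
    by_contra h
    rw [MeasureTheory.integral_undef h] at hnorm
    norm_num at hnorm
  have hkint : ∀ x : ℝ, 0 < x → Integrable (fun t : ℝ => t ^ q * Real.exp (-(t * x))) U :=
    fun x hx => aux_kernel_integrable hq hu hx hUae
  -- the key moment identity
  have key : ∀ s : ℝ, 0 < s →
      (∫⁻ x in Ioi 0, ENNReal.ofReal (x ^ (s - 1) * g x)) =
        ∫⁻ t, ENNReal.ofReal (t ^ q * (Real.Gamma s / t ^ s)) ∂U := by
    intro s hs
    have hmeas : AEMeasurable (Function.uncurry fun x t =>
        ENNReal.ofReal (x ^ (s - 1) * (t ^ q * Real.exp (-(t * x)))))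
        ((volume.restrict (Ioi 0)).prod U) := by
      apply Measurable.aemeasurable
      apply ENNReal.measurable_ofReal.comp
      have h1 : Measurable (fun p : ℝ × ℝ => p.1 ^ (s - 1)) := by measurability
      have h2 : Measurable (fun p : ℝ × ℝ => p.2 ^ q) := by measurability
      exact h1.mul (h2.mul ((measurable_snd.mul measurable_fst).neg.exp))
    calc (∫⁻ x in Ioi 0, ENNReal.ofReal (x ^ (s - 1) * g x))
        = ∫⁻ x in Ioi 0, ∫⁻ t, ENNReal.ofReal (x ^ (s - 1) * (t ^ q * Real.exp (-(t * x)))) ∂U := by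
          refine setLIntegral_congr_fun measurableSet_Ioi (fun x hx => ?_)
          rw [show x ^ (s - 1) * g x = ∫ t, x ^ (s - 1) * (t ^ q * Real.exp (-(t * x))) ∂U from
            (integral_const_mul _ _).symm]
          exact ofReal_integral_eq_lintegral_ofReal ((hkint x hx).const_mul _)
            (hUae.mono fun t ht => mul_nonneg (Real.rpow_nonneg hx.le _)
              (mul_nonneg (Real.rpow_nonneg (hu.le.trans ht) _) (Real.exp_pos _).le))
      _ = ∫⁻ t, (∫⁻ x in Ioi 0,
            ENNReal.ofReal (x ^ (s - 1) * (t ^ q * Real.exp (-(t * x))))) ∂U :=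
          lintegral_lintegral_swap hmeas
      _ = ∫⁻ t, ENNReal.ofReal (t ^ q * (Real.Gamma s / t ^ s)) ∂U := by
          refine lintegral_congr_ae (hUae.mono fun t ht => ?_)
          have htpos : 0 < t := lt_of_lt_of_le hu ht
          have htq : (0:ℝ) ≤ t ^ q := Real.rpow_nonneg htpos.le q
          calc (∫⁻ x in Ioi 0, ENNReal.ofReal (x ^ (s - 1) * (t ^ q * Real.exp (-(t * x)))))
              = ∫⁻ x in Ioi 0, ENNReal.ofReal (t ^ q) *
                  ENNReal.ofReal (x ^ (s - 1) * Real.exp (-(t * x))) := by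
                refine setLIntegral_congr_fun measurableSet_Ioi (fun x hx => ?_)
                rw [← ENNReal.ofReal_mul htq]
                congr 1
                ring
            _ = ENNReal.ofReal (t ^ q) *
                  ∫⁻ x in Ioi 0, ENNReal.ofReal (x ^ (s - 1) * Real.exp (-(t * x))) :=
                lintegral_const_mul' _ _ ENNReal.ofReal_ne_top
            _ = ENNReal.ofReal (t ^ q) * ENNReal.ofReal (Real.Gamma s / t ^ s) := by
                rw [← ofReal_integral_eq_lintegral_ofReal (aux_gamma_integrable hs htpos)
                  ((ae_restrict_iff' measurableSet_Ioi).2 (ae_of_all _ fun x hx =>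
                    mul_nonneg (Real.rpow_nonneg (le_of_lt hx) _) (Real.exp_pos _).le)),
                  aux_gamma_int hs htpos]
            _ = ENNReal.ofReal (t ^ q * (Real.Gamma s / t ^ s)) := (ENNReal.ofReal_mul htq).symm
  -- normalization: c * Γ(q) = 1
  have hnorm' : c * Real.Gamma q = 1 := by
    have e1 : ENNReal.ofReal 1 = ENNReal.ofReal c * ENNReal.ofReal (Real.Gamma q) := by
      calc ENNReal.ofReal 1 = ∫⁻ x in Ioi 0, ENNReal.ofReal (π x) := by
            rw [← hnorm]
            exact ofReal_integral_eq_lintegral_ofReal hπint hπnn_ae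
        _ = ∫⁻ x in Ioi 0, ENNReal.ofReal c * ENNReal.ofReal (x ^ (q - 1) * g x) := by
            refine setLIntegral_congr_fun measurableSet_Ioi (fun x hx => ?_)
            rw [hπ x hx, mul_assoc, ENNReal.ofReal_mul hc.le]
        _ = ENNReal.ofReal c * ∫⁻ x in Ioi 0, ENNReal.ofReal (x ^ (q - 1) * g x) :=
            lintegral_const_mul' _ _ ENNReal.ofReal_ne_top
        _ = ENNReal.ofReal c * ENNReal.ofReal (Real.Gamma q) := by
            rw [key q hq]
            congr 1
            rw [show (∫⁻ t, ENNReal.ofReal (t ^ q * (Real.Gamma q / t ^ q)) ∂U)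
                = ∫⁻ _, ENNReal.ofReal (Real.Gamma q) ∂U from
              lintegral_congr_ae (hUae.mono fun t ht => by
                have h0 : t ^ q ≠ 0 := (Real.rpow_pos_of_pos (lt_of_lt_of_le hu ht) q).ne'
                congr 1
                field_simp), lintegral_const, measure_univ, mul_one]
    have e2 : ENNReal.ofReal 1 = ENNReal.ofReal (c * Real.Gamma q) := by
      rw [e1, ← ENNReal.ofReal_mul hc.le]
    have e3 := (ENNReal.ofReal_eq_ofReal_iff (by norm_num) (by positivity)).mp e2
    linarith
  -- second moment bound
  have hGamma2 : c * Real.Gamma (q + 2) = q * (q + 1) := by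
    have h1 : Real.Gamma (q + 2) = (q + 1) * Real.Gamma (q + 1) := by
      rw [show q + 2 = (q + 1) + 1 by ring, Real.Gamma_add_one (by linarith)]
    have h2 : Real.Gamma (q + 1) = q * Real.Gamma q := Real.Gamma_add_one hq.ne'
    calc c * Real.Gamma (q + 2) = (q + 1) * q * (c * Real.Gamma q) := by rw [h1, h2]; ring
      _ = q * (q + 1) := by rw [hnorm']; ring
  have hM2nn_ae : 0 ≤ᵐ[volume.restrict (Ioi 0)] fun x => x ^ 2 * π x :=
    (ae_restrict_iff' measurableSet_Ioi).2 (ae_of_all _ fun x hx =>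
      mul_nonneg (sq_nonneg x) (hπnn x hx))
  have heq2 : ∀ x ∈ Ioi (0:ℝ), x ^ 2 * π x = c * (x ^ (q + 2 - 1) * g x) := by
    intro x hx
    rw [hπ x hx]
    have hx0 : (0:ℝ) < x := hx
    have hxe : x ^ (q + 2 - 1) = x ^ (2:ℕ) * x ^ (q - 1) := by
      rw [← Real.rpow_natCast x 2, ← Real.rpow_add hx0]
      congr 1
      push_cast
      try ring
    rw [hxe]
    ring
  have hl2 : (∫⁻ x in Ioi 0, ENNReal.ofReal (x ^ 2 * π x))
      ≤ ENNReal.ofReal (q * (q + 1) / u ^ 2) := by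
    calc (∫⁻ x in Ioi 0, ENNReal.ofReal (x ^ 2 * π x))
        = ENNReal.ofReal c * ∫⁻ x in Ioi 0, ENNReal.ofReal (x ^ (q + 2 - 1) * g x) := by
          rw [← lintegral_const_mul' _ _ ENNReal.ofReal_ne_top]
          refine setLIntegral_congr_fun measurableSet_Ioi (fun x hx => ?_)
          rw [heq2 x hx, ENNReal.ofReal_mul hc.le]
      _ = ENNReal.ofReal c *
            ∫⁻ t, ENNReal.ofReal (t ^ q * (Real.Gamma (q + 2) / t ^ (q + 2))) ∂U := by
          rw [key (q + 2) (by linarith)]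
      _ ≤ ENNReal.ofReal c * ∫⁻ _, ENNReal.ofReal (Real.Gamma (q + 2) / u ^ 2) ∂U := by
          refine mul_le_mul_right (lintegral_mono_ae (hUae.mono fun t ht => ?_)) _
          refine ENNReal.ofReal_le_ofReal ?_
          have htpos : 0 < t := lt_of_lt_of_le hu ht
          have h1 : t ^ (q + 2) = t ^ q * t ^ (2:ℕ) := by
            rw [← Real.rpow_natCast t 2, ← Real.rpow_add htpos]
            congr 1
            try push_cast
            try ring
          have h0 : t ^ q ≠ 0 := (Real.rpow_pos_of_pos htpos q).ne'
          have e : t ^ q * (Real.Gamma (q + 2) / t ^ (q + 2)) = Real.Gamma (q + 2) / t ^ 2 := by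
            rw [h1]
            field_simp
          rw [e]
          have hG2 : 0 < Real.Gamma (q + 2) := Real.Gamma_pos_of_pos (by linarith)
          apply div_le_div_of_nonneg_left hG2.le (by positivity)
          nlinarith
      _ = ENNReal.ofReal c * ENNReal.ofReal (Real.Gamma (q + 2) / u ^ 2) := by
          rw [lintegral_const, measure_univ, mul_one]
      _ = ENNReal.ofReal (q * (q + 1) / u ^ 2) := by
          rw [← ENNReal.ofReal_mul hc.le]
          congr 1
          rw [← hGamma2]
          ring
  have hM2int : IntegrableOn (fun x => x ^ 2 * π x) (Ioi 0) := by
    constructor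
    · exact ((continuous_pow 2).aestronglyMeasurable).mul hπaesm
    · rw [hasFiniteIntegral_iff_ofReal hM2nn_ae]
      exact lt_of_le_of_lt hl2 ENNReal.ofReal_lt_top
  have hM2le : (∫ x in Ioi 0, x ^ 2 * π x) ≤ q * (q + 1) / u ^ 2 := by
    have e := ofReal_integral_eq_lintegral_ofReal hM2int hM2nn_ae
    refine (ENNReal.ofReal_le_ofReal_iff (by positivity)).mp ?_
    rw [e]
    exact hl2
  -- first moment integrable
  have hM1int : IntegrableOn (fun x => x * π x) (Ioi 0) := by
    have hsum : Integrable (fun x => π x + x ^ 2 * π x) (volume.restrict (Ioi 0)) :=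
      hπint.add hM2int
    refine Integrable.mono' hsum
      ((continuous_id.aestronglyMeasurable).mul hπaesm) ?_
    rw [ae_restrict_iff' measurableSet_Ioi]
    refine ae_of_all _ fun x hx => ?_
    have h0 := hπnn x hx
    have hx0 : (0:ℝ) < x := hx
    rw [Real.norm_eq_abs, abs_of_nonneg (mul_nonneg hx0.le h0)]
    nlinarith [mul_le_mul_of_nonneg_right (show x ≤ 1 + x ^ 2 by nlinarith [sq_nonneg (x - 1)]) h0]
  -- AM-GM setup
  set B : ℝ := 2 * (q * (q + 1) / u ^ 2) with hBdef
  have hBpos : 0 < B := by positivity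
  have hsB : 0 < Real.sqrt B := Real.sqrt_pos.mpr hBpos
  have habs : ∀ y : ℝ, |y| ≤ (y ^ 2 + B) / (2 * Real.sqrt B) := by
    intro y
    rw [le_div_iff₀ (by positivity)]
    nlinarith [sq_nonneg (|y| - Real.sqrt B), Real.sq_sqrt hBpos.le, sq_abs y, abs_nonneg y]
  clear_value B
  have hexp : ∀ x1 : ℝ, (∫ x2 in Ioi 0, ((x1 - x2) ^ 2 + B) * π x2)
      = (x1 ^ 2 + B) + ((-(2 * x1)) * (∫ x2 in Ioi 0, x2 * π x2)
          + ∫ x2 in Ioi 0, x2 ^ 2 * π x2) := by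
    intro x1
    have e1 : (fun x2 => ((x1 - x2) ^ 2 + B) * π x2)
        = fun x2 => (x1 ^ 2 + B) * π x2 + ((-(2 * x1)) * (x2 * π x2) + x2 ^ 2 * π x2) := by
      funext x2
      ring
    have ha : Integrable (fun x2 : ℝ => (x1 ^ 2 + B) * π x2) (volume.restrict (Ioi 0)) :=
      hπint.const_mul _
    have hb : Integrable (fun x2 : ℝ => (-(2 * x1)) * (x2 * π x2)) (volume.restrict (Ioi 0)) :=
      hM1int.const_mul _
    have hbc : Integrable (fun x2 : ℝ => (-(2 * x1)) * (x2 * π x2) + x2 ^ 2 * π x2)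
        (volume.restrict (Ioi 0)) := hb.add hM2int
    rw [e1, integral_add ha hbc, integral_add hb hM2int, integral_const_mul, integral_const_mul,
      hnorm, mul_one]
  set M1 : ℝ := ∫ x2 in Ioi (0:ℝ), x2 * π x2 with hM1def
  set M2 : ℝ := ∫ x2 in Ioi (0:ℝ), x2 ^ 2 * π x2 with hM2def
  have hinner : ∀ x1 ∈ Ioi (0:ℝ),
      (∫ x2 in Ioi 0, |x1 - x2| * π x1 * π x2)
        ≤ π x1 * (((x1 ^ 2 + B) + ((-(2 * x1)) * M1 + M2)) / (2 * Real.sqrt B)) := by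
    intro x1 hx1
    have hπ1 := hπnn x1 hx1
    have hint : Integrable (fun x2 => (π x1 / (2 * Real.sqrt B)) * (((x1 - x2) ^ 2 + B) * π x2))
        (volume.restrict (Ioi 0)) := by
      have h := (((hπint.const_mul (x1 ^ 2 + B)).add
        ((hM1int.const_mul (-(2 * x1))).add hM2int)).const_mul (π x1 / (2 * Real.sqrt B)))
      exact h.congr (ae_of_all _ fun x2 => by simp only [Pi.add_apply]; ring)
    have step : (∫ x2 in Ioi 0, |x1 - x2| * π x1 * π x2)
        ≤ ∫ x2 in Ioi 0, (π x1 / (2 * Real.sqrt B)) * (((x1 - x2) ^ 2 + B) * π x2) := by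
      refine integral_mono_of_nonneg ?_ hint ?_
      · refine (ae_restrict_iff' measurableSet_Ioi).2 (ae_of_all _ fun x2 hx2 => ?_)
        exact mul_nonneg (mul_nonneg (abs_nonneg _) hπ1) (hπnn x2 hx2)
      · refine (ae_restrict_iff' measurableSet_Ioi).2 (ae_of_all _ fun x2 hx2 => ?_)
        have h2 := hπnn x2 hx2
        have h3 := habs (x1 - x2)
        calc |x1 - x2| * π x1 * π x2
            ≤ (((x1 - x2) ^ 2 + B) / (2 * Real.sqrt B)) * π x1 * π x2 := by gcongr
          _ = (π x1 / (2 * Real.sqrt B)) * (((x1 - x2) ^ 2 + B) * π x2) := by ring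
    calc (∫ x2 in Ioi 0, |x1 - x2| * π x1 * π x2)
        ≤ ∫ x2 in Ioi 0, (π x1 / (2 * Real.sqrt B)) * (((x1 - x2) ^ 2 + B) * π x2) := step
      _ = (π x1 / (2 * Real.sqrt B)) * ((x1 ^ 2 + B) + ((-(2 * x1)) * M1 + M2)) := by
          rw [integral_const_mul, hexp x1]
      _ = π x1 * (((x1 ^ 2 + B) + ((-(2 * x1)) * M1 + M2)) / (2 * Real.sqrt B)) := by ring
  have houter_int : IntegrableOn
      (fun x1 => π x1 * (((x1 ^ 2 + B) + ((-(2 * x1)) * M1 + M2)) / (2 * Real.sqrt B)))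
      (Ioi 0) := by
    have h := ((hM2int.add ((hπint.const_mul (B + M2)).add
      (hM1int.const_mul (-(2 * M1))))).const_mul (1 / (2 * Real.sqrt B)))
    exact h.congr (ae_of_all _ fun x1 => by simp only [Pi.add_apply]; ring)
  have main : (∫ x1 in Ioi 0, ∫ x2 in Ioi 0, |x1 - x2| * π x1 * π x2)
      ≤ ∫ x1 in Ioi 0, π x1 * (((x1 ^ 2 + B) + ((-(2 * x1)) * M1 + M2)) / (2 * Real.sqrt B)) := by
    refine integral_mono_of_nonneg ?_ houter_int ?_
    · refine (ae_restrict_iff' measurableSet_Ioi).2 (ae_of_all _ fun x1 hx1 => ?_)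
      refine integral_nonneg_of_ae ((ae_restrict_iff' measurableSet_Ioi).2
        (ae_of_all _ fun x2 hx2 => ?_))
      exact mul_nonneg (mul_nonneg (abs_nonneg _) (hπnn x1 hx1)) (hπnn x2 hx2)
    · exact (ae_restrict_iff' measurableSet_Ioi).2 (ae_of_all _ hinner)
  have hval : (∫ x1 in Ioi 0, π x1 * (((x1 ^ 2 + B) + ((-(2 * x1)) * M1 + M2)) / (2 * Real.sqrt B)))
      = (1 / (2 * Real.sqrt B)) * (M2 + ((B + M2) + (-(2 * M1)) * M1)) := by
    have e1 : (fun x1 => π x1 * (((x1 ^ 2 + B) + ((-(2 * x1)) * M1 + M2)) / (2 * Real.sqrt B)))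
        = fun x1 => (1 / (2 * Real.sqrt B)) *
            (x1 ^ 2 * π x1 + ((B + M2) * π x1 + (-(2 * M1)) * (x1 * π x1))) := by
      funext x1
      ring
    have ha : Integrable (fun x1 : ℝ => (B + M2) * π x1) (volume.restrict (Ioi 0)) :=
      hπint.const_mul _
    have hb : Integrable (fun x1 : ℝ => (-(2 * M1)) * (x1 * π x1)) (volume.restrict (Ioi 0)) :=
      hM1int.const_mul _
    have hab : Integrable (fun x1 : ℝ => (B + M2) * π x1 + (-(2 * M1)) * (x1 * π x1))
        (volume.restrict (Ioi 0)) := ha.add hb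
    rw [e1, integral_const_mul, integral_add hM2int hab,
      integral_add ha hb, integral_const_mul,
      integral_const_mul, hnorm, mul_one]
  have hfinal : (1 / (2 * Real.sqrt B)) * (M2 + ((B + M2) + (-(2 * M1)) * M1)) ≤ Real.sqrt B := by
    have h1 : M2 + ((B + M2) + (-(2 * M1)) * M1) ≤ 2 * B := by
      nlinarith [sq_nonneg M1, hM2le]
    calc (1 / (2 * Real.sqrt B)) * (M2 + ((B + M2) + (-(2 * M1)) * M1))
        ≤ (1 / (2 * Real.sqrt B)) * (2 * B) := by
          exact mul_le_mul_of_nonneg_left h1 (by positivity)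
      _ = B / Real.sqrt B := by
          field_simp
      _ = Real.sqrt B := Real.div_sqrt
  have hsqrtB : Real.sqrt B = Real.sqrt (2 * q * (q + 1)) / u := by
    rw [hBdef, show 2 * (q * (q + 1) / u ^ 2) = (2 * q * (q + 1)) / u ^ 2 by ring,
      Real.sqrt_div (by positivity) (u ^ 2), Real.sqrt_sq hu.le]
  calc (∫ x1 in Ioi (0:ℝ), ∫ x2 in Ioi 0, |x1 - x2| * π x1 * π x2)
      ≤ ∫ x1 in Ioi 0, π x1 * (((x1 ^ 2 + B) + ((-(2 * x1)) * M1 + M2)) / (2 * Real.sqrt B)) :=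
        main
    _ = (1 / (2 * Real.sqrt B)) * (M2 + ((B + M2) + (-(2 * M1)) * M1)) := hval
    _ ≤ Real.sqrt B := hfinal
    _ = Real.sqrt (2 * q * (q + 1)) / u := hsqrtB
end

section
/- Let u_0 > 0, B̄ > 0, b > 0, δ > 1, J ∈ ℕ, and let (y_j)_{j≥1} be positive reals with b^j y_j ≥ δ^j for all j ≥ J. Set S_k = u_0 + Σ_{j=1}^k b^j y_j for k ≥ 0. Then for all n ≥ J, (Π_{k=0}^{n−1} (1 + B̄/S_k)) / S_n ≤ exp(B̄ J / u_0) · exp(B̄ δ/(δ − 1)) · δ^{−n}. -/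
open Finset

/-- Deterministic estimate: if `b^j y_j ≥ δ^j` for all `j ≥ J` and
`S_k = u₀ + ∑_{j=1}^k b^j y_j`, then for `n ≥ J`,
`(∏_{k=0}^{n-1} (1 + B̄/S_k)) / S_n ≤ exp(B̄ J/u₀) exp(B̄ δ/(δ-1)) δ^{-n}`. -/
theorem deterministic_product_bound
    (u0 Bbar b δ : ℝ) (hu0 : 0 < u0) (hB : 0 < Bbar) (hb : 0 < b) (hδ : 1 < δ)
    (J : ℕ) (hJ : 1 ≤ J) (y : ℕ → ℝ) (hy : ∀ j, 1 ≤ j → 0 < y j)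
    (hge : ∀ j, J ≤ j → δ ^ j ≤ b ^ j * y j)
    (S : ℕ → ℝ) (hS : ∀ k, S k = u0 + ∑ j ∈ Finset.Icc 1 k, b ^ j * y j)
    (n : ℕ) (hn : J ≤ n) :
    (∏ k ∈ Finset.range n, (1 + Bbar / S k)) / S n ≤
      Real.exp (Bbar * J / u0) * Real.exp (Bbar * δ / (δ - 1)) / δ ^ n := by
  have hδ0 : (0:ℝ) < δ := lt_trans one_pos hδ
  -- S k ≥ u0
  have hSu : ∀ k, u0 ≤ S k := by
    intro k
    rw [hS k]
    have : (0:ℝ) ≤ ∑ j ∈ Finset.Icc 1 k, b ^ j * y j := by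
      apply Finset.sum_nonneg
      intro j hj
      have hj1 : 1 ≤ j := (Finset.mem_Icc.mp hj).1
      exact le_of_lt (mul_pos (pow_pos hb j) (hy j hj1))
    linarith
  have hSpos : ∀ k, 0 < S k := fun k => lt_of_lt_of_le hu0 (hSu k)
  -- S k ≥ δ^k for k ≥ J
  have hSδ : ∀ k, J ≤ k → δ ^ k ≤ S k := by
    intro k hk
    have hk1 : 1 ≤ k := le_trans hJ hk
    have hmem : k ∈ Finset.Icc 1 k := Finset.mem_Icc.mpr ⟨hk1, le_refl k⟩
    have h1 : b ^ k * y k ≤ ∑ j ∈ Finset.Icc 1 k, b ^ j * y j := by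
      apply Finset.single_le_sum (f := fun j => b ^ j * y j) _ hmem
      intro j hj
      exact le_of_lt (mul_pos (pow_pos hb j) (hy j (Finset.mem_Icc.mp hj).1))
    have h2 := hge k hk
    rw [hS k]
    linarith
  -- product bound
  have hprod : (∏ k ∈ Finset.range n, (1 + Bbar / S k)) ≤
      Real.exp (∑ k ∈ Finset.range n, Bbar / S k) := by
    rw [Real.exp_sum]
    apply Finset.prod_le_prod
    · intro k _
      have : 0 < Bbar / S k := div_pos hB (hSpos k)
      linarith
    · intro k _
      have := Real.add_one_le_exp (Bbar / S k)
      linarith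
  -- sum bound
  have hsplit : Finset.range n = Finset.range J ∪ Finset.Ico J n := by
    rw [Finset.range_eq_Ico, (Finset.Ico_union_Ico_eq_Ico (Nat.zero_le J) hn).symm, ← Finset.range_eq_Ico]
  have hsum1 : (∑ k ∈ Finset.range J, Bbar / S k) ≤ Bbar * J / u0 := by
    calc (∑ k ∈ Finset.range J, Bbar / S k) ≤ ∑ k ∈ Finset.range J, Bbar / u0 := by
          apply Finset.sum_le_sum
          intro k _
          exact div_le_div_of_nonneg_left (le_of_lt hB) hu0 (hSu k)
      _ = Bbar * J / u0 := by
          rw [Finset.sum_const, Finset.card_range]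
          ring
  have hsum2 : (∑ k ∈ Finset.Ico J n, Bbar / S k) ≤ Bbar * δ / (δ - 1) := by
    have hinv0 : (0:ℝ) ≤ δ⁻¹ := le_of_lt (inv_pos.mpr hδ0)
    have hinv1 : δ⁻¹ < 1 := inv_lt_one_of_one_lt₀ hδ
    have hstep : (∑ k ∈ Finset.Ico J n, Bbar / S k) ≤
        ∑ k ∈ Finset.Ico J n, Bbar * δ⁻¹ ^ k := by
      apply Finset.sum_le_sum
      intro k hk
      have hkJ : J ≤ k := (Finset.mem_Ico.mp hk).1
      have h1 : δ ^ k ≤ S k := hSδ k hkJ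
      have h2 : Bbar / S k ≤ Bbar / δ ^ k :=
        div_le_div_of_nonneg_left (le_of_lt hB) (pow_pos hδ0 k) h1
      calc Bbar / S k ≤ Bbar / δ ^ k := h2
        _ = Bbar * δ⁻¹ ^ k := by rw [div_eq_mul_inv, inv_pow]
    have hgeo : (∑ k ∈ Finset.Ico J n, δ⁻¹ ^ k) ≤ δ / (δ - 1) := by
      have h1 : (∑ k ∈ Finset.Ico J n, δ⁻¹ ^ k) ≤ ∑ k ∈ Finset.range n, δ⁻¹ ^ k := by
        rw [Finset.range_eq_Ico]
        apply Finset.sum_le_sum_of_subset_of_nonneg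
        · exact Finset.Ico_subset_Ico (Nat.zero_le J) (le_refl n)
        · intro k _ _; exact pow_nonneg hinv0 k
      have h2 : (∑ k ∈ Finset.range n, δ⁻¹ ^ k) ≤ ∑' k : ℕ, δ⁻¹ ^ k :=
        Summable.sum_le_tsum _ (fun k _ => pow_nonneg hinv0 k)
          (summable_geometric_of_lt_one hinv0 hinv1)
      have h3 : (∑' k : ℕ, δ⁻¹ ^ k) = (1 - δ⁻¹)⁻¹ :=
        tsum_geometric_of_lt_one hinv0 hinv1
      have h4 : (1 - δ⁻¹)⁻¹ = δ / (δ - 1) := by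
        rw [show 1 - δ⁻¹ = (δ - 1) / δ by field_simp, inv_div]
      linarith
    calc (∑ k ∈ Finset.Ico J n, Bbar / S k) ≤ ∑ k ∈ Finset.Ico J n, Bbar * δ⁻¹ ^ k := hstep
      _ = Bbar * ∑ k ∈ Finset.Ico J n, δ⁻¹ ^ k := by rw [Finset.mul_sum]
      _ ≤ Bbar * (δ / (δ - 1)) := by
          exact mul_le_mul_of_nonneg_left hgeo (le_of_lt hB)
      _ = Bbar * δ / (δ - 1) := by ring
  have hsum : (∑ k ∈ Finset.range n, Bbar / S k) ≤ Bbar * J / u0 + Bbar * δ / (δ - 1) := by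
    rw [hsplit, Finset.sum_union (by
      rw [Finset.range_eq_Ico]
      exact Finset.Ico_disjoint_Ico_consecutive 0 J n)]
    linarith
  have hprod' : (∏ k ∈ Finset.range n, (1 + Bbar / S k)) ≤
      Real.exp (Bbar * J / u0) * Real.exp (Bbar * δ / (δ - 1)) := by
    rw [← Real.exp_add]
    exact le_trans hprod (Real.exp_le_exp.mpr hsum)
  have hprodnn : (0:ℝ) ≤ ∏ k ∈ Finset.range n, (1 + Bbar / S k) := by
    apply Finset.prod_nonneg
    intro k _
    have : 0 < Bbar / S k := div_pos hB (hSpos k)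
    linarith
  exact div_le_div₀ (le_of_lt (mul_pos (Real.exp_pos _) (Real.exp_pos _))) hprod'
    (pow_pos hδ0 n) (hSδ n hn)
end
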